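/- arXiv:1911.00937 — 6 statements merged into one kernel-verified Lean document; each statement's English description precedes it below -/
import Mathlib

section
/- If r and r' are rank tuples with Σ_i r_i ≠ Σ_i r'_i, then 𝒞(r) and 𝒞(r') are disjoint: 𝒞(r) ∩ 𝒞(r') = ∅. -/
open Matrix

lemma prod_cons {n m : ℕ} (f : Fin (m+1) → Bool → Matrix (Fin n) (Fin n) ℝ)
    (c : Bool) (d : Fin m → Bool) :
    ((List.finRange (m+1)).map
      (fun i => f i ((Fin.consEquiv (fun _ => Bool)) (c, d) i))).prod
    = f 0 c * ((List.finRange m).map (fun i => f i.succ (d i))).prod := by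
  rw [List.finRange_succ]
  simp [Fin.consEquiv, Fin.cons_zero, Fin.cons_succ, List.map_map, Function.comp_def]

lemma sum_prod_one {n : ℕ} : ∀ (m : ℕ) (f : Fin m → Bool → Matrix (Fin n) (Fin n) ℝ),
    (∀ i, f i false + f i true = 1) →
    ∑ δ : Fin m → Bool, ((List.finRange m).map (fun i => f i (δ i))).prod = 1 := by
  intro m
  induction m with
  | zero => intro f _; simp
  | succ m ih =>
    intro f h1
    rw [← ((Fin.consEquiv (fun _ : Fin (m+1) => Bool))).sum_comp, Fintype.sum_prod_type]
    simp_rw [prod_cons, ← Finset.mul_sum, ih (fun i b => f i.succ b) (fun i => h1 i.succ),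
      mul_one]
    rw [Fintype.sum_bool, add_comm]
    exact h1 0

lemma sum_prod_weight {n : ℕ} : ∀ (m : ℕ) (f : Fin m → Bool → Matrix (Fin n) (Fin n) ℝ),
    (∀ i, f i false + f i true = 1) →
    ∑ δ : Fin m → Bool, (∑ i, (if δ i then 1 else 0) : ℕ) •
        ((List.finRange m).map (fun i => f i (δ i))).prod = ∑ i, f i true := by
  intro m
  induction m with
  | zero => intro f _; simp
  | succ m ih =>
    intro f h1
    rw [← ((Fin.consEquiv (fun _ : Fin (m+1) => Bool))).sum_comp, Fintype.sum_prod_type]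
    have hw : ∀ (c : Bool) (d : Fin m → Bool),
        (∑ i, (if (Fin.consEquiv (fun _ : Fin (m+1) => Bool)) (c, d) i then 1 else 0) : ℕ)
        = (if c then 1 else 0) + ∑ i, (if d i then 1 else 0) := by
      intro c d
      rw [Fin.sum_univ_succ]
      simp [Fin.consEquiv]
    simp_rw [prod_cons, hw, add_smul, Finset.sum_add_distrib]
    have t1 : ∀ c : Bool, ∑ d : Fin m → Bool, (if c then 1 else 0 : ℕ) •
        (f 0 c * ((List.finRange m).map (fun i => f i.succ (d i))).prod)
        = (if c then 1 else 0 : ℕ) • f 0 c := by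
      intro c
      rw [← Finset.smul_sum, ← Finset.mul_sum,
        sum_prod_one m (fun i b => f i.succ b) (fun i => h1 i.succ), mul_one]
    have t2 : ∀ c : Bool, ∑ d : Fin m → Bool, (∑ i, (if d i then 1 else 0) : ℕ) •
        (f 0 c * ((List.finRange m).map (fun i => f i.succ (d i))).prod)
        = f 0 c * ∑ i : Fin m, f i.succ true := by
      intro c
      simp_rw [← mul_smul_comm, ← Finset.mul_sum,
        ih (fun i b => f i.succ b) (fun i => h1 i.succ)]
    simp_rw [t1, t2]
    rw [Fintype.sum_bool, Fintype.sum_bool, Fin.sum_univ_succ]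
    simp only [Bool.false_eq_true, if_true, if_false, one_smul, zero_smul, add_zero]
    have h0 : f 0 true + f 0 false = 1 := by rw [add_comm]; exact h1 0
    rw [← add_mul, h0, one_mul]

lemma trace_eq_rank_aux {n : ℕ} (P : Matrix (Fin n) (Fin n) ℝ) (h : P * P = P) :
    P.trace = (P.rank : ℝ) := by
  set f := P.mulVecLin with hf
  have hl : f ∘ₗ f = f := by rw [hf, ← Matrix.mulVecLin_mul, h]
  have hp : LinearMap.IsProj (LinearMap.range f) f := by
    refine ⟨fun x => LinearMap.mem_range_self _ x, ?_⟩
    rintro x ⟨y, rfl⟩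
    exact congrFun (congrArg DFunLike.coe hl) y
  have ht := hp.trace
  have h2 : LinearMap.trace ℝ (Fin n → ℝ) f = P.trace := by
    rw [LinearMap.trace_eq_matrix_trace ℝ (Pi.basisFun ℝ (Fin n)) f,
      LinearMap.toMatrix_eq_toMatrix']
    congr 1
    rw [hf, ← Matrix.toLin'_apply', LinearMap.toMatrix'_toLin']
  rw [← h2, ht]
  rfl

def Wt (K : ℕ) (δ : Fin (K-1) → Bool) : ℕ := ∑ i, (if δ i then 1 else 0)

lemma wt_lt {K : ℕ} (hK : 2 ≤ K) (δ : Fin (K-1) → Bool) : Wt K δ < K := by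
  have : Wt K δ ≤ ∑ _i : Fin (K-1), 1 := by
    apply Finset.sum_le_sum
    intro i _
    split <;> simp
  simp only [Finset.sum_const, Finset.card_univ, Fintype.card_fin, smul_eq_mul, mul_one] at this
  omega

def IsSymProj (n : ℕ) (P : Matrix (Fin n) (Fin n) ℝ) : Prop :=
  P * P = P ∧ Pᵀ = P

noncomputable def Aker (n K : ℕ) (P : Fin (K-1) → Matrix (Fin n) (Fin n) ℝ)
    (H : Matrix (Fin n) (Fin n) ℝ) : Fin K → Matrix (Fin n) (Fin n) ℝ :=
  fun j => ∑ δ ∈ Finset.univ.filter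
      (fun δ : Fin (K-1) → Bool => (∑ i, (if δ i then 1 else 0)) = (j : ℕ)),
    H * ((List.finRange (K-1)).map
      (fun i => if δ i then (1 : Matrix (Fin n) (Fin n) ℝ) - P i else P i)).prod

def SOCK (n K : ℕ) (r : Fin (K-1) → ℕ) : Set (Fin K → Matrix (Fin n) (Fin n) ℝ) :=
  {A | ∃ P H, (∀ i, IsSymProj n (P i) ∧ (P i).rank = r i) ∧
    Hᵀ * H = 1 ∧ H.det = 1 ∧ A = Aker n K P H}

lemma sock_invariant (n K : ℕ) (hK : 2 ≤ K)
    (P : Fin (K-1) → Matrix (Fin n) (Fin n) ℝ) (H : Matrix (Fin n) (Fin n) ℝ)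
    (hP : ∀ i, (P i) * (P i) = P i) (hH : Hᵀ * H = 1) :
    Matrix.trace ((∑ j, Aker n K P H j)ᵀ * ∑ j : Fin K, (j : ℕ) • Aker n K P H j)
      = ∑ i : Fin (K-1), ((n : ℝ) - ((P i).rank : ℝ)) := by
  set f : Fin (K-1) → Bool → Matrix (Fin n) (Fin n) ℝ :=
    fun i b => if b then 1 - P i else P i with hfdef
  have hf1 : ∀ i, f i false + f i true = 1 := by
    intro i; simp only [hfdef, Bool.false_eq_true, if_true, if_false]; abel
  set g : (Fin (K-1) → Bool) → Matrix (Fin n) (Fin n) ℝ :=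
    fun δ => H * ((List.finRange (K-1)).map (fun i => f i (δ i))).prod with hgdef
  have hmaps : ∀ δ ∈ (Finset.univ : Finset (Fin (K-1) → Bool)), Wt K δ ∈ Finset.range K :=
    fun δ _ => Finset.mem_range.mpr (wt_lt hK δ)
  have hA : ∀ j : Fin K, Aker n K P H j
      = ∑ δ ∈ Finset.univ.filter (fun δ => Wt K δ = (j : ℕ)), g δ := by
    intro j; rfl
  have S1 : ∑ j : Fin K, Aker n K P H j = H := by
    simp_rw [hA]
    rw [Fin.sum_univ_eq_sum_range
      (fun j => ∑ δ ∈ Finset.univ.filter (fun δ => Wt K δ = j), g δ) K]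
    rw [Finset.sum_fiberwise_of_maps_to hmaps g]
    rw [hgdef]
    simp only
    rw [← Finset.mul_sum, sum_prod_one (K-1) f hf1, mul_one]
  have S2 : ∑ j : Fin K, (j : ℕ) • Aker n K P H j = H * ∑ i, (1 - P i) := by
    simp_rw [hA]
    rw [Fin.sum_univ_eq_sum_range
      (fun j => j • ∑ δ ∈ Finset.univ.filter (fun δ => Wt K δ = j), g δ) K]
    have : ∀ j ∈ Finset.range K,
        j • ∑ δ ∈ Finset.univ.filter (fun δ => Wt K δ = j), g δ
        = ∑ δ ∈ Finset.univ.filter (fun δ => Wt K δ = j), Wt K δ • g δ := by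
      intro j _
      rw [Finset.smul_sum]
      refine Finset.sum_congr rfl (fun δ hδ => ?_)
      rw [(Finset.mem_filter.mp hδ).2]
    rw [Finset.sum_congr rfl this,
      Finset.sum_fiberwise_of_maps_to hmaps (fun δ => Wt K δ • g δ)]
    have : ∀ δ, Wt K δ • g δ
        = H * (Wt K δ • ((List.finRange (K-1)).map (fun i => f i (δ i))).prod) := by
      intro δ; rw [mul_smul_comm]
    rw [Finset.sum_congr rfl (fun δ _ => this δ), ← Finset.mul_sum]
    congr 1
    have h2 := sum_prod_weight (K-1) f hf1
    simp only [hfdef, if_true] at h2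
    simp only [Wt, hfdef]
    exact h2
  rw [S1, S2, ← mul_assoc, hH, one_mul, trace_sum]
  refine Finset.sum_congr rfl (fun i _ => ?_)
  rw [trace_sub, trace_one, trace_eq_rank_aux (P i) (hP i)]
  simp

theorem stmt2 (n K : ℕ) (hn : 1 ≤ n) (hK : 2 ≤ K)
    (r r' : Fin (K-1) → ℕ) (hr : ∀ i, r i ≤ n) (hr' : ∀ i, r' i ≤ n)
    (hsum : ∑ i, r i ≠ ∑ i, r' i) :
    SOCK n K r ∩ SOCK n K r' = ∅ := by
  rw [Set.eq_empty_iff_forall_notMem]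
  rintro A ⟨⟨P, H, hP, hH, hdet, hAe⟩, ⟨P', H', hP', hH', hdet', hAe'⟩⟩
  have e1 := sock_invariant n K hK P H (fun i => ((hP i).1).1) hH
  have e2 := sock_invariant n K hK P' H' (fun i => ((hP' i).1).1) hH'
  rw [← hAe] at e1
  rw [← hAe'] at e2
  have e1' : Matrix.trace ((∑ j, A j)ᵀ * ∑ j : Fin K, (j : ℕ) • A j)
      = ∑ i : Fin (K-1), ((n : ℝ) - (r i : ℝ)) := by
    rw [e1]
    exact Finset.sum_congr rfl (fun i _ => by rw [(hP i).2])
  have e2' : Matrix.trace ((∑ j, A j)ᵀ * ∑ j : Fin K, (j : ℕ) • A j)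
      = ∑ i : Fin (K-1), ((n : ℝ) - (r' i : ℝ)) := by
    rw [e2]
    exact Finset.sum_congr rfl (fun i _ => by rw [(hP' i).2])
  have key : ∑ i : Fin (K-1), ((n : ℝ) - (r i : ℝ))
      = ∑ i : Fin (K-1), ((n : ℝ) - (r' i : ℝ)) := by rw [← e1', e2']
  rw [Finset.sum_sub_distrib, Finset.sum_sub_distrib] at key
  have : (∑ i, (r i : ℝ)) = ∑ i, (r' i : ℝ) := by linarith
  apply hsum
  exact_mod_cast this
end

section
/- 𝒞 equals the union of the canonical SOCK submanifolds: 𝒞 = 𝒞_0 ∪ 𝒞_1 ∪ ⋯ ∪ 𝒞_{(K−1)n}. -/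
open Matrix

/-- The canonical (balanced, non-decreasing) rank tuple with `m` entries summing to `k`. -/
def canonRank (m k : ℕ) : Fin m → ℕ :=
  fun i => k / m + (if m ≤ (i : ℕ) + k % m then 1 else 0)

def SOCKall (n K : ℕ) : Set (Fin K → Matrix (Fin n) (Fin n) ℝ) :=
  ⋃ r ∈ {r : Fin (K-1) → ℕ | ∀ i, r i ≤ n}, SOCK n K r


section helpers
variable {n : ℕ}

lemma rank_eq_trace_idem (M : Matrix (Fin n) (Fin n) ℝ) (h : M * M = M) :
    (M.rank : ℝ) = M.trace := by
  have hf : M.mulVecLin ∘ₗ M.mulVecLin = M.mulVecLin := by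
    rw [← Matrix.mulVecLin_mul, h]
  obtain ⟨p, hp⟩ := (LinearMap.isProj_iff_isIdempotentElem M.mulVecLin).mpr hf
  have hrange : LinearMap.range M.mulVecLin = p := by
    apply le_antisymm
    · rintro x ⟨v, rfl⟩; exact hp.map_mem v
    · intro x hx; exact ⟨x, hp.map_id x hx⟩
  have htr : LinearMap.trace ℝ _ M.mulVecLin = (Module.finrank ℝ p : ℝ) := hp.trace
  have h2 : LinearMap.trace ℝ _ M.mulVecLin = M.trace := by
    rw [LinearMap.trace_eq_matrix_trace ℝ (Pi.basisFun ℝ (Fin n)),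
      LinearMap.toMatrix_eq_toMatrix', ← Matrix.toLin'_apply', LinearMap.toMatrix'_toLin']
  rw [Matrix.rank, hrange, ← h2, htr]

lemma exists_fixed_killed (A B : Matrix (Fin n) (Fin n) ℝ)
    (hA : A * A = A) (h : B.rank < A.rank) :
    ∃ w : Fin n → ℝ, w ≠ 0 ∧ A *ᵥ w = w ∧ B *ᵥ w = 0 := by
  set U := LinearMap.range A.mulVecLin with hUdef
  set W := LinearMap.ker B.mulVecLin with hWdef
  have hU : Module.finrank ℝ U = A.rank := rfl
  have hW : B.rank + Module.finrank ℝ W = n := by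
    have := LinearMap.finrank_range_add_finrank_ker B.mulVecLin
    simpa [Matrix.rank] using this
  have hsup : Module.finrank ℝ (U ⊔ W : Submodule ℝ (Fin n → ℝ)) ≤ n := by
    simpa using Submodule.finrank_le (U ⊔ W)
  have hkey := Submodule.finrank_sup_add_finrank_inf_eq U W
  have hpos : 0 < Module.finrank ℝ (U ⊓ W : Submodule ℝ (Fin n → ℝ)) := by omega
  have hne : (U ⊓ W : Submodule ℝ (Fin n → ℝ)) ≠ ⊥ := by
    intro hbot
    rw [hbot] at hpos
    simp at hpos
  obtain ⟨w, hwUW, hw0⟩ := Submodule.exists_mem_ne_zero_of_ne_bot hne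
  obtain ⟨hwU, hwW⟩ := hwUW
  obtain ⟨v, hv⟩ := hwU
  have hAw : A *ᵥ w = w := by
    have h1 : A.mulVecLin v = A *ᵥ v := rfl
    rw [← hv, h1, Matrix.mulVec_mulVec, hA]
  have hBw : B *ᵥ w = 0 := hwW
  exact ⟨w, hw0, hAw, hBw⟩

/-- rank-one projector construction -/
lemma projR_props (P Q : Matrix (Fin n) (Fin n) ℝ) (hP2 : Pᵀ = P) (hQ2 : Qᵀ = Q)
    (w : Fin n → ℝ) (hw0 : w ≠ 0) (hPw : P *ᵥ w = w) (hQw : Q *ᵥ w = 0) :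
    ∃ R : Matrix (Fin n) (Fin n) ℝ, R * R = R ∧ Rᵀ = R ∧ R.trace = 1 ∧
      P * R = R ∧ R * P = R ∧ Q * R = 0 ∧ R * Q = 0 := by
  set c : ℝ := ∑ i, w i * w i with hc
  have hcpos : 0 < c := by
    obtain ⟨i, hi⟩ := Function.ne_iff.mp hw0
    refine Finset.sum_pos' (fun k _ => mul_self_nonneg (w k)) ⟨i, Finset.mem_univ i, ?_⟩
    exact mul_self_pos.mpr (by simpa using hi)
  set V : Matrix (Fin n) (Fin n) ℝ := vecMulVec w w with hV
  have hVt : Vᵀ = V := by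
    ext i j
    simp [hV, vecMulVec_apply, mul_comm]
  have hPV : P * V = V := by
    ext i j
    simp only [hV, Matrix.mul_apply, vecMulVec_apply]
    calc ∑ k, P i k * (w k * w j) = (∑ k, P i k * w k) * w j := by
          rw [Finset.sum_mul]; exact Finset.sum_congr rfl fun k _ => by ring
      _ = w i * w j := by
          have hwi : (∑ k, P i k * w k) = w i := by
            simpa [Matrix.mulVec, dotProduct] using congrFun hPw i
          rw [hwi]
  have hVP : V * P = V := by
    have := congrArg Matrix.transpose hPV
    rw [Matrix.transpose_mul, hVt, hP2] at this
    exact this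
  have hQV : Q * V = 0 := by
    ext i j
    simp only [hV, Matrix.mul_apply, vecMulVec_apply, Matrix.zero_apply]
    calc ∑ k, Q i k * (w k * w j) = (∑ k, Q i k * w k) * w j := by
          rw [Finset.sum_mul]; exact Finset.sum_congr rfl fun k _ => by ring
      _ = 0 := by
          have hwi : (∑ k, Q i k * w k) = 0 := by
            simpa [Matrix.mulVec, dotProduct] using congrFun hQw i
          rw [hwi, zero_mul]
  have hVQ : V * Q = 0 := by
    have := congrArg Matrix.transpose hQV
    rw [Matrix.transpose_mul, hVt, hQ2, Matrix.transpose_zero] at this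
    exact this
  have hVV : V * V = c • V := by
    ext i j
    simp only [hV, Matrix.mul_apply, vecMulVec_apply, Matrix.smul_apply, smul_eq_mul, hc]
    rw [Finset.sum_mul]
    exact Finset.sum_congr rfl fun k _ => by ring
  refine ⟨c⁻¹ • V, ?_, ?_, ?_, ?_, ?_, ?_, ?_⟩
  · rw [Matrix.smul_mul, Matrix.mul_smul, hVV, smul_smul, smul_smul]
    congr 1
    field_simp
  · rw [Matrix.transpose_smul, hVt]
  · rw [Matrix.trace_smul]
    have : V.trace = c := by
      simp [hV, Matrix.trace, Matrix.diag, vecMulVec_apply, hc]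
    rw [this, smul_eq_mul]
    field_simp
  · rw [Matrix.mul_smul, hPV]
  · rw [Matrix.smul_mul, hVP]
  · rw [Matrix.mul_smul, hQV, smul_zero]
  · rw [Matrix.smul_mul, hVQ, smul_zero]

lemma cast_rank_eq {A : Matrix (Fin n) (Fin n) ℝ} {k : ℕ}
    (hAB : (A.rank : ℝ) = (k : ℝ)) : A.rank = k := by
  exact_mod_cast hAB

lemma transfer_gt (P Q : Matrix (Fin n) (Fin n) ℝ)
    (hP1 : P * P = P) (hP2 : Pᵀ = P) (hQ1 : Q * Q = Q) (hQ2 : Qᵀ = Q)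
    (h : Q.rank < P.rank) :
    ∃ P' Q' : Matrix (Fin n) (Fin n) ℝ,
      (P' * P' = P' ∧ P'ᵀ = P') ∧ (Q' * Q' = Q' ∧ Q'ᵀ = Q') ∧
      P'.rank = P.rank - 1 ∧ Q'.rank = Q.rank + 1 ∧
      P' * Q' = P * Q ∧ P' + Q' = P + Q := by
  obtain ⟨w, hw0, hPw, hQw⟩ := exists_fixed_killed P Q hP1 h
  obtain ⟨R, hRR, hRt, hRtr, hPR, hRP, hQR, hRQ⟩ := projR_props P Q hP2 hQ2 w hw0 hPw hQw
  refine ⟨P - R, Q + R, ⟨?_, ?_⟩, ⟨?_, ?_⟩, ?_, ?_, ?_, ?_⟩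
  · have e : (P - R) * (P - R) = P * P - P * R - R * P + R * R := by noncomm_ring
    rw [e, hP1, hPR, hRP, hRR]; abel
  · rw [Matrix.transpose_sub, hP2, hRt]
  · have e : (Q + R) * (Q + R) = Q * Q + Q * R + R * Q + R * R := by noncomm_ring
    rw [e, hQ1, hQR, hRQ, hRR]; abel
  · rw [Matrix.transpose_add, hQ2, hRt]
  · have hid : (P - R) * (P - R) = P - R := by
      have e : (P - R) * (P - R) = P * P - P * R - R * P + R * R := by noncomm_ring
      rw [e, hP1, hPR, hRP, hRR]; abel
    have e1 := rank_eq_trace_idem (P - R) hid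
    have e2 := rank_eq_trace_idem P hP1
    rw [Matrix.trace_sub, ← e2, hRtr] at e1
    have h1 : 1 ≤ P.rank := by omega
    refine cast_rank_eq ?_
    rw [e1]
    push_cast [h1]
    ring
  · have hid : (Q + R) * (Q + R) = Q + R := by
      have e : (Q + R) * (Q + R) = Q * Q + Q * R + R * Q + R * R := by noncomm_ring
      rw [e, hQ1, hQR, hRQ, hRR]; abel
    have e1 := rank_eq_trace_idem (Q + R) hid
    have e2 := rank_eq_trace_idem Q hQ1
    rw [Matrix.trace_add, ← e2, hRtr] at e1
    refine cast_rank_eq ?_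
    rw [e1]
    push_cast
    ring
  · have e : (P - R) * (Q + R) = P * Q + P * R - R * Q - R * R := by noncomm_ring
    rw [e, hPR, hRQ, hRR]; abel
  · abel

lemma transfer_lt (P Q : Matrix (Fin n) (Fin n) ℝ)
    (hP1 : P * P = P) (hP2 : Pᵀ = P) (hQ1 : Q * Q = Q) (hQ2 : Qᵀ = Q)
    (h : P.rank < Q.rank) :
    ∃ P' Q' : Matrix (Fin n) (Fin n) ℝ,
      (P' * P' = P' ∧ P'ᵀ = P') ∧ (Q' * Q' = Q' ∧ Q'ᵀ = Q') ∧
      P'.rank = P.rank + 1 ∧ Q'.rank = Q.rank - 1 ∧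
      P' * Q' = P * Q ∧ P' + Q' = P + Q := by
  obtain ⟨w, hw0, hQw, hPw⟩ := exists_fixed_killed Q P hQ1 h
  obtain ⟨R, hRR, hRt, hRtr, hQR, hRQ, hPR, hRP⟩ := projR_props Q P hQ2 hP2 w hw0 hQw hPw
  refine ⟨P + R, Q - R, ⟨?_, ?_⟩, ⟨?_, ?_⟩, ?_, ?_, ?_, ?_⟩
  · have e : (P + R) * (P + R) = P * P + P * R + R * P + R * R := by noncomm_ring
    rw [e, hP1, hPR, hRP, hRR]; abel
  · rw [Matrix.transpose_add, hP2, hRt]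
  · have e : (Q - R) * (Q - R) = Q * Q - Q * R - R * Q + R * R := by noncomm_ring
    rw [e, hQ1, hQR, hRQ, hRR]; abel
  · rw [Matrix.transpose_sub, hQ2, hRt]
  · have hid : (P + R) * (P + R) = P + R := by
      have e : (P + R) * (P + R) = P * P + P * R + R * P + R * R := by noncomm_ring
      rw [e, hP1, hPR, hRP, hRR]; abel
    have e1 := rank_eq_trace_idem (P + R) hid
    have e2 := rank_eq_trace_idem P hP1
    rw [Matrix.trace_add, ← e2, hRtr] at e1
    refine cast_rank_eq ?_
    rw [e1]; push_cast; ring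
  · have hid : (Q - R) * (Q - R) = Q - R := by
      have e : (Q - R) * (Q - R) = Q * Q - Q * R - R * Q + R * R := by noncomm_ring
      rw [e, hQ1, hQR, hRQ, hRR]; abel
    have e1 := rank_eq_trace_idem (Q - R) hid
    have e2 := rank_eq_trace_idem Q hQ1
    rw [Matrix.trace_sub, ← e2, hRtr] at e1
    have h1 : 1 ≤ Q.rank := by omega
    refine cast_rank_eq ?_
    rw [e1]; push_cast [h1]; ring
  · have e : (P + R) * (Q - R) = P * Q - P * R + R * Q - R * R := by noncomm_ring
    rw [e, hPR, hRQ, hRR]; abel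
  · abel
end helpers


section poly
open Polynomial
variable {n : ℕ}

local notation "Mx" => Matrix (Fin n) (Fin n) ℝ

lemma sum_weight_eq_coeff (m : ℕ) (F : Fin m → Bool → Mx) (j : ℕ) :
    ∑ δ : Fin m → Bool,
      (if (∑ i, (if δ i then 1 else 0)) = j
        then ((List.finRange m).map (fun i => F i (δ i))).prod else 0)
    = (((List.finRange m).map (fun i => C (F i false) + X * C (F i true))).prod).coeff j := by
  induction m generalizing j with
  | zero =>
    have huniv : (Finset.univ : Finset (Fin 0 → Bool)) = {fun i => i.elim0} :=
      Finset.eq_singleton_iff_unique_mem.mpr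
        ⟨Finset.mem_univ _, fun x _ => funext fun i => i.elim0⟩
    rw [huniv, Finset.sum_singleton, List.finRange_zero, List.map_nil, List.prod_nil,
      List.map_nil, List.prod_nil, Polynomial.coeff_one]
    have h0 : (∑ i : Fin 0, if (fun i : Fin 0 => i.elim0) i = true then 1 else 0) = 0 := by simp
    rw [h0]
    by_cases hj : j = 0 <;> simp [hj, Ne.symm]
  | succ m ih =>
    rw [List.finRange_succ]
    simp only [List.map_cons, List.prod_cons, List.map_map, Function.comp_def]
    have ihx := fun j' => ih (fun i b => F (Fin.succ i) b) j'
    set Pr : (Fin m → Bool) → Mx :=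
      fun δ' => ((List.finRange m).map (fun i => F (Fin.succ i) (δ' i))).prod with hPr
    set q : Polynomial Mx :=
      ((List.finRange m).map (fun i => C (F (Fin.succ i) false) + X * C (F (Fin.succ i) true))).prod with hq
    have key : (∑ δ : Fin (m+1) → Bool,
        if (∑ i, (if δ i then 1 else 0)) = j
          then F 0 (δ 0) * ((List.finRange m).map (fun i => F (Fin.succ i) (δ (Fin.succ i)))).prod else 0)
      = ∑ b : Bool, ∑ δ' : Fin m → Bool,
          (if ((if b then 1 else 0) + ∑ i, (if δ' i then 1 else 0)) = j
            then F 0 b * Pr δ' else 0) := by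
      rw [← Equiv.sum_comp (Fin.consEquiv (fun _ : Fin (m+1) => Bool))
        (fun δ => if (∑ i, (if δ i then 1 else 0)) = j
          then F 0 (δ 0) * ((List.finRange m).map (fun i => F (Fin.succ i) (δ (Fin.succ i)))).prod else 0)]
      rw [Fintype.sum_prod_type]
      refine Finset.sum_congr rfl fun b _ => Finset.sum_congr rfl fun δ' _ => ?_
      simp only [Fin.consEquiv_apply, Fin.sum_univ_succ, Fin.cons_zero, Fin.cons_succ, hPr]
    rw [key, Fintype.sum_bool]
    have pull : ∀ (b : Bool) (c : ℕ),
        (∑ δ' : Fin m → Bool,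
          if (c + ∑ i, (if δ' i then 1 else 0)) = j then F 0 b * Pr δ' else 0)
        = F 0 b * ∑ δ' : Fin m → Bool,
            (if (c + ∑ i, (if δ' i then 1 else 0)) = j then Pr δ' else 0) := by
      intro b c
      rw [Finset.mul_sum]
      exact Finset.sum_congr rfl fun δ' _ => by rw [mul_ite, mul_zero]
    simp only [show (if (true = true) then (1:ℕ) else 0) = 1 by simp,
      show (if (false = true) then (1:ℕ) else 0) = 0 by simp, eq_self_iff_true, if_true]
    rw [pull true 1, pull false 0]
    rw [add_mul, Polynomial.coeff_add, Polynomial.coeff_C_mul]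
    have hfalse : (∑ δ' : Fin m → Bool,
        (if (0 + ∑ i, (if δ' i then 1 else 0)) = j then Pr δ' else 0)) = q.coeff j := by
      rw [← ihx j]
      exact Finset.sum_congr rfl fun δ' _ => by rw [zero_add]
    cases j with
    | zero =>
      have htrue : (∑ δ' : Fin m → Bool,
          (if (1 + ∑ i, (if δ' i then 1 else 0)) = 0 then Pr δ' else 0)) = 0 := by
        apply Finset.sum_eq_zero; intro δ' _; simp
      have hX : (X * C (F 0 true) * q).coeff 0 = 0 := by
        rw [mul_assoc, Polynomial.mul_coeff_zero, Polynomial.coeff_X_zero, zero_mul]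
      rw [htrue, hX, hfalse, mul_zero]
      rw [zero_add, add_zero]
    | succ j' =>
      have htrue : (∑ δ' : Fin m → Bool,
          (if (1 + ∑ i, (if δ' i then 1 else 0)) = j' + 1 then Pr δ' else 0)) = q.coeff j' := by
        rw [← ihx j']
        refine Finset.sum_congr rfl fun δ' _ => ?_
        congr 1
        simp only [eq_iff_iff]
        omega
      have hX : (X * C (F 0 true) * q).coeff (j'+1) = F 0 true * q.coeff j' := by
        rw [mul_assoc, Polynomial.coeff_X_mul, Polynomial.coeff_C_mul]
      rw [htrue, hX, hfalse]
      exact add_comm _ _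

lemma fac_expand (U V : Mx) :
    (C U + X * C (1-U)) * (C V + X * C (1-V))
      = C (U*V) + C ((U+V) - (U*V + U*V)) * X + C (1 - (U+V) + U*V) * X^2 := by
  have cX : ∀ M : Mx, X * C M = C M * X := fun M => Polynomial.X_mul
  calc (C U + X * C (1-U)) * (C V + X * C (1-V))
      = (C U + C (1-U) * X) * (C V + C (1-V) * X) := by rw [cX, cX]
    _ = C U * C V + (C U * C (1-V)) * X + C (1-U) * (X * C V) + C (1-U) * ((X * C (1-V)) * X) := by
        noncomm_ring
    _ = C U * C V + (C U * C (1-V)) * X + (C (1-U) * C V) * X + (C (1-U) * C (1-V)) * (X * X) := by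
        rw [cX, cX]; noncomm_ring
    _ = C (U*V) + C (U*(1-V) + (1-U)*V) * X + C ((1-U)*(1-V)) * X^2 := by
        rw [← Polynomial.C_mul, ← Polynomial.C_mul, ← Polynomial.C_mul, ← Polynomial.C_mul,
          ← sq, add_assoc (C (U*V)) (C (U*(1-V)) * X) (C ((1-U)*V) * X), ← add_mul,
          ← Polynomial.C_add]
    _ = C (U*V) + C ((U+V) - (U*V + U*V)) * X + C (1 - (U+V) + U*V) * X^2 := by
        congr 2
        · congr 1; noncomm_ring
        · congr 1; noncomm_ring

lemma fac_mul_fac (A B A' B' : Mx) (h1 : A*B = A'*B') (h2 : A+B = A'+B') :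
    (C A + X * C (1-A)) * (C B + X * C (1-B))
      = (C A' + X * C (1-A')) * (C B' + X * C (1-B')) := by
  rw [fac_expand, fac_expand, h1, h2]

lemma list_prod_adjacent {M : Type*} [Monoid M] (m : ℕ) (g g' : Fin m → M)
    (i0 i1 : Fin m) (h01 : (i1:ℕ) = (i0:ℕ)+1)
    (hpair : g i0 * g i1 = g' i0 * g' i1)
    (hagree : ∀ i, i ≠ i0 → i ≠ i1 → g i = g' i) :
    ((List.finRange m).map g).prod = ((List.finRange m).map g').prod := by
  set l := List.finRange m with hl
  have hlen : l.length = m := List.length_finRange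
  have h0 : (i0:ℕ) < l.length := by rw [hlen]; exact i0.isLt
  have h1 : (i0:ℕ)+1 < l.length := by rw [hlen, ← h01]; exact i1.isLt
  have hget0 : l[(i0:ℕ)]'h0 = i0 := by
    apply Fin.ext; simp [hl, List.getElem_finRange]
  have hget1 : l[(i0:ℕ)+1]'h1 = i1 := by
    apply Fin.ext; simp [hl, List.getElem_finRange, h01]
  have hsplit : l = l.take (i0:ℕ) ++ i0 :: i1 :: l.drop ((i0:ℕ)+2) := by
    conv_lhs => rw [← List.take_append_drop (i0:ℕ) l]
    congr 1
    rw [List.drop_eq_getElem_cons h0, hget0]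
    congr 1
    rw [show (i0:ℕ)+1+1 = (i0:ℕ)+2 from rfl] at *
    rw [List.drop_eq_getElem_cons h1, hget1]
  have htake : ∀ x ∈ l.take (i0:ℕ), g x = g' x := by
    intro x hx
    obtain ⟨k, hk, hkx⟩ := List.mem_iff_getElem.mp hx
    have hklt : k < (i0:ℕ) := by
      have := hk; simp [List.length_take, hlen] at this; omega
    have hxval : (x:ℕ) = k := by
      rw [← hkx]
      have : (l.take (i0:ℕ))[k]'hk = l[k]'(by rw [hlen]; omega) := List.getElem_take
      rw [this]
      simp [hl, List.getElem_finRange]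
    refine hagree x (fun h => ?_) (fun h => ?_)
    · rw [h] at hxval; omega
    · rw [h] at hxval; omega
  have hdrop : ∀ x ∈ l.drop ((i0:ℕ)+2), g x = g' x := by
    intro x hx
    obtain ⟨k, hk, hkx⟩ := List.mem_iff_getElem.mp hx
    have hxval : (x:ℕ) = (i0:ℕ)+2+k := by
      rw [← hkx]
      have : (l.drop ((i0:ℕ)+2))[k]'hk = l[(i0:ℕ)+2+k]'(by
        have := hk; simp [List.length_drop, hlen] at this ⊢; omega) := List.getElem_drop
      rw [this]
      simp [hl, List.getElem_finRange]
    refine hagree x (fun h => ?_) (fun h => ?_)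
    · rw [h] at hxval; omega
    · rw [h] at hxval; omega
  have e1 : (l.take (i0:ℕ)).map g = (l.take (i0:ℕ)).map g' := List.map_congr_left htake
  have e2 : (l.drop ((i0:ℕ)+2)).map g = (l.drop ((i0:ℕ)+2)).map g' := List.map_congr_left hdrop
  conv_lhs => rw [hsplit]
  conv_rhs => rw [hsplit]
  simp only [List.map_append, List.map_cons, List.prod_append, List.prod_cons]
  rw [e1, e2, ← mul_assoc (g i0) (g i1), hpair, mul_assoc]
end poly


section aker
open Polynomial

lemma aker_coeff (n K : ℕ) (P : Fin (K-1) → Matrix (Fin n) (Fin n) ℝ)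
    (H : Matrix (Fin n) (Fin n) ℝ) (j : Fin K) :
    Aker n K P H j
      = H * ((((List.finRange (K-1)).map
          (fun i => C (P i) + X * C (1 - P i))).prod).coeff (j:ℕ)) := by
  have hW := sum_weight_eq_coeff (n := n) (K-1)
    (fun i b => if b then 1 - P i else P i) (j:ℕ)
  simp only [Bool.false_eq_true, eq_self_iff_true, if_true, if_false] at hW
  simp only [Aker]
  rw [Finset.sum_filter, ← hW, Finset.mul_sum]
  refine Finset.sum_congr rfl fun δ _ => by rw [mul_ite, mul_zero]

lemma aker_invariant (n K : ℕ) (P P' : Fin (K-1) → Matrix (Fin n) (Fin n) ℝ)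
    (H : Matrix (Fin n) (Fin n) ℝ) (i0 i1 : Fin (K-1)) (h01 : (i1:ℕ) = (i0:ℕ)+1)
    (hprod : P i0 * P i1 = P' i0 * P' i1) (hsum : P i0 + P i1 = P' i0 + P' i1)
    (hagree : ∀ i, i ≠ i0 → i ≠ i1 → P i = P' i) :
    Aker n K P H = Aker n K P' H := by
  funext j
  rw [aker_coeff, aker_coeff]
  have hli := list_prod_adjacent (K-1)
    (fun i => C (P i) + X * C (1 - P i)) (fun i => C (P' i) + X * C (1 - P' i)) i0 i1 h01
    (fac_mul_fac _ _ _ _ hprod hsum)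
    (fun i hi hi' => by simp only [hagree i hi hi'])
  rw [hli]
end aker


section comb
variable {m : ℕ}

def Sm (r : Fin m → ℕ) : ℕ := ∑ i : Fin m, r i
def Vm (r : Fin m → ℕ) : ℕ := ∑ i : Fin m, r i * r i
def Wm (r : Fin m → ℕ) : ℕ := ∑ i : Fin m, (m - (i:ℕ)) * r i

def StepRel (m : ℕ) (r r' : Fin m → ℕ) : Prop :=
  ∃ i0 i1 : Fin m, (i1:ℕ) = (i0:ℕ)+1 ∧ r i0 ≠ r i1 ∧
    r' = Function.update (Function.update r i0
        (if r i1 < r i0 then r i0 - 1 else r i0 + 1)) i1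
      (if r i1 < r i0 then r i1 + 1 else r i1 - 1)

lemma sum_upd2 (c : Fin m → ℕ → ℕ) (f : Fin m → ℕ) {i0 i1 : Fin m} (h : i0 ≠ i1) (a b : ℕ) :
    (∑ i, c i (Function.update (Function.update f i0 a) i1 b i)) + c i0 (f i0) + c i1 (f i1)
      = (∑ i, c i (f i)) + c i0 a + c i1 b := by
  have hfun : (fun i => c i (Function.update (Function.update f i0 a) i1 b i))
      = Function.update (Function.update (fun i => c i (f i)) i0 (c i0 a)) i1 (c i1 b) := by
    funext i
    by_cases e1 : i = i1
    · subst e1; simp [Function.update_self]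
    · by_cases e0 : i = i0
      · subst e0
        rw [Function.update_of_ne e1, Function.update_self, Function.update_of_ne e1,
          Function.update_self]
      · rw [Function.update_of_ne e1, Function.update_of_ne e0, Function.update_of_ne e1,
          Function.update_of_ne e0]
  rw [hfun]
  rw [Finset.sum_update_of_mem (Finset.mem_univ i1),
    Finset.sum_update_of_mem (Finset.mem_sdiff.mpr
      ⟨Finset.mem_univ i0, by simp [h]⟩)]
  have h1 : (∑ i, c i (f i))
      = c i1 (f i1) + ∑ i ∈ Finset.univ.erase i1, c i (f i) :=
    (Finset.add_sum_erase _ _ (Finset.mem_univ i1)).symm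
  have h2 : (∑ i ∈ Finset.univ.erase i1, c i (f i))
      = c i0 (f i0) + ∑ i ∈ (Finset.univ.erase i1).erase i0, c i (f i) :=
    (Finset.add_sum_erase _ _ (Finset.mem_erase.mpr ⟨h, Finset.mem_univ i0⟩)).symm
  simp only [Finset.erase_eq] at h1 h2 ⊢
  omega

lemma step_facts {r r' : Fin m → ℕ} (i0 i1 : Fin m) (h01 : (i1:ℕ) = (i0:ℕ)+1)
    (hne : r i0 ≠ r i1)
    (hr' : r' = Function.update (Function.update r i0
        (if r i1 < r i0 then r i0 - 1 else r i0 + 1)) i1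
      (if r i1 < r i0 then r i1 + 1 else r i1 - 1)) :
    Sm r' = Sm r ∧ Vm r' ≤ Vm r := by
  have hne01 : i0 ≠ i1 := fun h => by rw [h] at h01; omega
  by_cases hlt : r i1 < r i0
  · rw [hr', if_pos hlt, if_pos hlt] at *
    have hS := sum_upd2 (fun _ x => x) r hne01 (r i0 - 1) (r i1 + 1)
    have hV := sum_upd2 (fun _ x => x * x) r hne01 (r i0 - 1) (r i1 + 1)
    constructor
    · simp only [Sm]; omega
    · simp only [Vm] at hV ⊢
      have hc : ((r i1 : ℤ)) < (r i0 : ℤ) := by exact_mod_cast hlt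
      zify [show 1 ≤ r i0 by omega] at hV ⊢
      nlinarith [hV, hc]
  · have hlt' : r i0 < r i1 := by omega
    rw [hr', if_neg hlt, if_neg hlt] at *
    have hS := sum_upd2 (fun _ x => x) r hne01 (r i0 + 1) (r i1 - 1)
    have hV := sum_upd2 (fun _ x => x * x) r hne01 (r i0 + 1) (r i1 - 1)
    constructor
    · simp only [Sm]; omega
    · simp only [Vm] at hV ⊢
      have hc : ((r i0 : ℤ)) < (r i1 : ℤ) := by exact_mod_cast hlt'
      zify [show 1 ≤ r i1 by omega] at hV ⊢
      nlinarith [hV, hc]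

lemma step_W_desc {r r' : Fin m → ℕ} (i0 i1 : Fin m) (h01 : (i1:ℕ) = (i0:ℕ)+1)
    (hlt : r i1 < r i0)
    (hr' : r' = Function.update (Function.update r i0
        (if r i1 < r i0 then r i0 - 1 else r i0 + 1)) i1
      (if r i1 < r i0 then r i1 + 1 else r i1 - 1)) :
    Wm r' < Wm r := by
  have hne01 : i0 ≠ i1 := fun h => by rw [h] at h01; omega
  rw [hr', if_pos hlt, if_pos hlt]
  have hW := sum_upd2 (fun i x => (m - (i:ℕ)) * x) r hne01 (r i0 - 1) (r i1 + 1)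
  simp only [Wm]
  have hi0m : (i0:ℕ) ≤ m := le_of_lt i0.isLt
  have hi1m : (i1:ℕ) ≤ m := le_of_lt i1.isLt
  have hmi : m - (i0:ℕ) = (m - (i1:ℕ)) + 1 := by omega
  have hmiz : ((m:ℤ) - (i0:ℕ)) = ((m:ℤ) - (i1:ℕ)) + 1 := by omega
  zify [hi0m, hi1m, show 1 ≤ r i0 by omega] at hW ⊢
  nlinarith [hW, hmiz]

lemma gap_adjacent (r : Fin m → ℕ) (i0 i1 : Fin m) (h01 : (i1:ℕ) = (i0:ℕ)+1)
    (hgap : r i0 + 2 ≤ r i1 ∨ r i1 + 2 ≤ r i0) :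
    ∃ r', StepRel m r r' ∧ Sm r' = Sm r ∧ Vm r' < Vm r := by
  have hne01 : i0 ≠ i1 := fun h => by rw [h] at h01; omega
  have hne : r i0 ≠ r i1 := by omega
  refine ⟨_, ⟨i0, i1, h01, hne, rfl⟩, ?_, ?_⟩
  · exact (step_facts i0 i1 h01 hne rfl).1
  · by_cases hlt : r i1 < r i0
    · rw [if_pos hlt, if_pos hlt]
      have hgap2 : r i1 + 2 ≤ r i0 := by omega
      have hc : ((r i1 : ℤ)) + 2 ≤ (r i0 : ℤ) := by exact_mod_cast hgap2
      have hV := sum_upd2 (fun _ x => x * x) r hne01 (r i0 - 1) (r i1 + 1)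
      simp only [Vm] at hV ⊢
      zify [show 1 ≤ r i0 by omega] at hV ⊢
      nlinarith [hV, hc]
    · rw [if_neg hlt, if_neg hlt]
      have hgap2 : r i0 + 2 ≤ r i1 := by omega
      have hc : ((r i0 : ℤ)) + 2 ≤ (r i1 : ℤ) := by exact_mod_cast hgap2
      have hV := sum_upd2 (fun _ x => x * x) r hne01 (r i0 + 1) (r i1 - 1)
      simp only [Vm] at hV ⊢
      zify [show 1 ≤ r i1 by omega] at hV ⊢
      nlinarith [hV, hc]

lemma gap : ∀ (d : ℕ), ∀ (r : Fin m → ℕ) (p q : Fin m), 1 ≤ d → (q:ℕ) = (p:ℕ) + d →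
    (r p + 2 ≤ r q ∨ r q + 2 ≤ r p) →
    ∃ r', Relation.ReflTransGen (StepRel m) r r' ∧ Sm r' = Sm r ∧ Vm r' < Vm r := by
  intro d
  induction d using Nat.strong_induction_on with
  | _ d ih =>
  intro r p q hd hq hgap
  rcases eq_or_lt_of_le hd with h1 | h2
  · have h01 : (q:ℕ) = (p:ℕ) + 1 := by omega
    obtain ⟨r', hstep, hS, hV⟩ := gap_adjacent r p q h01 hgap
    exact ⟨r', Relation.ReflTransGen.single hstep, hS, hV⟩
  · have hp1lt : (p:ℕ)+1 < m := by have := q.isLt; omega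
    set p1 : Fin m := ⟨(p:ℕ)+1, hp1lt⟩ with hp1def
    have hp1 : (p1:ℕ) = (p:ℕ)+1 := rfl
    have hpq : p ≠ q := Fin.ne_of_val_ne (by omega)
    have hp1q : p1 ≠ q := Fin.ne_of_val_ne (by rw [hp1]; omega)
    have hne01 : p ≠ p1 := Fin.ne_of_val_ne (by rw [hp1]; omega)
    by_cases hA : (r p1 + 2 ≤ r q ∨ r q + 2 ≤ r p1)
    · exact ih (d-1) (by omega) r p1 q (by omega) (by rw [hp1]; omega) hA
    · push_neg at hA
      obtain ⟨hA1, hA2⟩ := hA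
      rcases hgap with hg | hg
      · by_cases hadj : r p + 2 ≤ r p1
        · exact ih 1 (by omega) r p p1 (le_refl 1) hp1 (Or.inl hadj)
        · have hx : r p1 = r p + 1 := by omega
          have hne : r p ≠ r p1 := by omega
          have hstep : StepRel m r (Function.update (Function.update r p
              (if r p1 < r p then r p - 1 else r p + 1)) p1
              (if r p1 < r p then r p1 + 1 else r p1 - 1)) := ⟨p, p1, hp1, hne, rfl⟩
          have hltf : ¬ r p1 < r p := by omega
          rw [if_neg hltf, if_neg hltf] at hstep
          set r2 : Fin m → ℕ :=
            Function.update (Function.update r p (r p + 1)) p1 (r p1 - 1) with hr2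
          have hr2p1 : r2 p1 = r p := by
            rw [hr2, Function.update_self]; omega
          have hr2q : r2 q = r q := by
            rw [hr2, Function.update_of_ne (Ne.symm hp1q), Function.update_of_ne (Ne.symm hpq)]
          have hgap2 : r2 p1 + 2 ≤ r2 q := by rw [hr2p1, hr2q]; omega
          obtain ⟨r'', hreach, hS, hV⟩ :=
            ih (d-1) (by omega) r2 p1 q (by omega) (by rw [hp1]; omega) (Or.inl hgap2)
          have hSw := sum_upd2 (fun _ x => x) r hne01 (r p + 1) (r p1 - 1)
          have hVw := sum_upd2 (fun _ x => x * x) r hne01 (r p + 1) (r p1 - 1)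
          have hS2 : Sm r2 = Sm r := by simp only [Sm, hr2] at *; omega
          have hV2 : Vm r2 = Vm r := by
            simp only [Vm, hr2] at hVw ⊢
            rw [show r p + 1 = r p1 from hx.symm, show r p1 - 1 = r p by omega] at hVw ⊢
            omega
          exact ⟨r'', Relation.ReflTransGen.head hstep hreach, by rw [hS, hS2],
            by rw [← hV2]; exact hV⟩
      · by_cases hadj : r p1 + 2 ≤ r p
        · exact ih 1 (by omega) r p p1 (le_refl 1) hp1 (Or.inr hadj)
        · have hlow : r p1 < r p := by omega
          have hx : r p = r p1 + 1 := by omega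
          have hne : r p ≠ r p1 := by omega
          have hstep : StepRel m r (Function.update (Function.update r p
              (if r p1 < r p then r p - 1 else r p + 1)) p1
              (if r p1 < r p then r p1 + 1 else r p1 - 1)) := ⟨p, p1, hp1, hne, rfl⟩
          rw [if_pos hlow, if_pos hlow] at hstep
          set r2 : Fin m → ℕ :=
            Function.update (Function.update r p (r p - 1)) p1 (r p1 + 1) with hr2
          have hr2p1 : r2 p1 = r p := by
            rw [hr2, Function.update_self]; omega
          have hr2q : r2 q = r q := by
            rw [hr2, Function.update_of_ne (Ne.symm hp1q), Function.update_of_ne (Ne.symm hpq)]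
          have hgap2 : r2 q + 2 ≤ r2 p1 := by rw [hr2p1, hr2q]; omega
          obtain ⟨r'', hreach, hS, hV⟩ :=
            ih (d-1) (by omega) r2 p1 q (by omega) (by rw [hp1]; omega) (Or.inr hgap2)
          have hSw := sum_upd2 (fun _ x => x) r hne01 (r p - 1) (r p1 + 1)
          have hVw := sum_upd2 (fun _ x => x * x) r hne01 (r p - 1) (r p1 + 1)
          have hS2 : Sm r2 = Sm r := by simp only [Sm, hr2] at *; omega
          have hV2 : Vm r2 = Vm r := by
            simp only [Vm, hr2] at hVw ⊢
            rw [show r p - 1 = r p1 by omega, show r p1 + 1 = r p from hx.symm] at hVw ⊢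
            omega
          exact ⟨r'', Relation.ReflTransGen.head hstep hreach, by rw [hS, hS2],
            by rw [← hV2]; exact hV⟩

lemma mono_of_adj {r : Fin m → ℕ} (h : ∀ i0 i1 : Fin m, (i1:ℕ) = (i0:ℕ)+1 → r i0 ≤ r i1) :
    ∀ (d : ℕ) (p q : Fin m), (q:ℕ) = (p:ℕ) + d → r p ≤ r q := by
  intro d
  induction d with
  | zero =>
    intro p q hq
    have : p = q := Fin.ext (by omega)
    rw [this]
  | succ d ihd =>
    intro p q hq
    have hlt : (p:ℕ) + d < m := by have := q.isLt; omega
    exact le_trans (ihd p ⟨(p:ℕ)+d, hlt⟩ rfl) (h ⟨(p:ℕ)+d, hlt⟩ q (by simp; omega))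

lemma canon_char {r : Fin m → ℕ}
    (hmono : ∀ p q : Fin m, (p:ℕ) ≤ (q:ℕ) → r p ≤ r q)
    (hflat : ∀ p q : Fin m, r q ≤ r p + 1) :
    r = canonRank m (Sm r) := by
  rcases Nat.eq_zero_or_pos m with hm | hm
  · funext i
    exact absurd i.isLt (by omega)
  · set i₀ : Fin m := ⟨0, hm⟩ with hi₀
    set a := r i₀ with ha
    have hvals : ∀ i, r i = a ∨ r i = a + 1 := fun i => by
      have h1 := hmono i₀ i (Nat.zero_le _)
      have h2 := hflat i₀ i
      omega
    set T := Finset.univ.filter (fun i : Fin m => r i = a + 1) with hT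
    set t := T.card with ht
    have hsum : Sm r = m * a + t := by
      have hpt : ∀ i : Fin m, r i = a + (if r i = a + 1 then 1 else 0) := fun i => by
        rcases hvals i with h | h
        · rw [if_neg (by omega)]; omega
        · rw [if_pos h]; omega
      calc Sm r = ∑ i : Fin m, (a + if r i = a + 1 then 1 else 0) :=
            Finset.sum_congr rfl (fun i _ => hpt i)
        _ = m * a + t := by
            rw [Finset.sum_add_distrib, Finset.sum_const, Finset.card_univ, Fintype.card_fin,
              smul_eq_mul, ht, hT]
            congr 1
            simp [Finset.sum_boole]
    have h0T : i₀ ∉ T := by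
      rw [hT, Finset.mem_filter]
      push_neg
      intro _
      omega
    have htm : t < m := by
      have hne : T ≠ Finset.univ := fun hTe => h0T (hTe ▸ Finset.mem_univ i₀)
      have := Finset.card_lt_card (Finset.ssubset_univ_iff.mpr hne)
      rwa [Finset.card_univ, Fintype.card_fin] at this
    have hdiv : Sm r / m = a := by
      rw [hsum, Nat.mul_add_div hm, Nat.div_eq_of_lt htm, add_zero]
    have hmod : Sm r % m = t := by
      rw [hsum, Nat.mul_add_mod, Nat.mod_eq_of_lt htm]
    funext i
    simp only [canonRank, hdiv, hmod]
    rcases hvals i with h | h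
    · have hsub : T ⊆ Finset.Ioi i := by
        intro j hj
        have hj1 : r j = a + 1 := (Finset.mem_filter.mp hj).2
        rw [Finset.mem_Ioi]
        by_contra hle
        have hji : (j:ℕ) ≤ (i:ℕ) := by
          rw [not_lt] at hle
          exact hle
        have := hmono j i hji
        omega
      have hcard := Finset.card_le_card hsub
      rw [Fin.card_Ioi] at hcard
      have hilt := i.isLt
      rw [h, if_neg (by omega)]
      omega
    · have hsub : Finset.Ici i ⊆ T := by
        intro j hj
        rw [Finset.mem_Ici] at hj
        have hij : (i:ℕ) ≤ (j:ℕ) := hj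
        have h1 := hmono i j hij
        rcases hvals j with h2 | h2
        · omega
        · rw [hT, Finset.mem_filter]
          exact ⟨Finset.mem_univ j, h2⟩
      have hcard := Finset.card_le_card hsub
      rw [Fin.card_Ici] at hcard
      have hilt := i.isLt
      rw [h, if_pos (by omega)]

lemma reach_canon (m : ℕ) (r : Fin m → ℕ) :
    Relation.ReflTransGen (StepRel m) r (canonRank m (Sm r)) := by
  suffices H : ∀ v w (r : Fin m → ℕ), Vm r = v → Wm r = w →
      Relation.ReflTransGen (StepRel m) r (canonRank m (Sm r)) from H _ _ r rfl rfl
  intro v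
  induction v using Nat.strong_induction_on with
  | _ v ihv =>
  intro w
  induction w using Nat.strong_induction_on with
  | _ w ihw =>
  intro r hv hw
  by_cases hdesc : ∃ i0 i1 : Fin m, (i1:ℕ) = (i0:ℕ)+1 ∧ r i1 < r i0
  · obtain ⟨i0, i1, h01, hlt⟩ := hdesc
    have hne : r i0 ≠ r i1 := by omega
    set r2 := Function.update (Function.update r i0
        (if r i1 < r i0 then r i0 - 1 else r i0 + 1)) i1
      (if r i1 < r i0 then r i1 + 1 else r i1 - 1) with hr2
    have hstep : StepRel m r r2 := ⟨i0, i1, h01, hne, hr2⟩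
    obtain ⟨hS2, hV2⟩ := step_facts i0 i1 h01 hne hr2
    have hW2 : Wm r2 < Wm r := step_W_desc i0 i1 h01 hlt hr2
    have hrest : Relation.ReflTransGen (StepRel m) r2 (canonRank m (Sm r2)) := by
      rcases lt_or_eq_of_le hV2 with hVlt | hVeq
      · exact ihv (Vm r2) (by omega) (Wm r2) r2 rfl rfl
      · exact ihw (Wm r2) (by omega) r2 (by omega) rfl
    rw [hS2] at hrest
    exact Relation.ReflTransGen.head hstep hrest
  · push_neg at hdesc
    have hmono : ∀ p q : Fin m, (p:ℕ) ≤ (q:ℕ) → r p ≤ r q := by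
      intro p q hpq
      obtain ⟨d, hd⟩ := Nat.exists_eq_add_of_le hpq
      exact mono_of_adj (fun i0 i1 h => hdesc i0 i1 h) d p q hd
    by_cases hflat : ∀ p q : Fin m, r q ≤ r p + 1
    · rw [← canon_char hmono hflat]
    · push_neg at hflat
      obtain ⟨p, q, hpq⟩ := hflat
      have hplt : (p:ℕ) < (q:ℕ) := by
        by_contra hle
        have := hmono q p (by omega)
        omega
      obtain ⟨r'', hreach, hS, hV⟩ :=
        gap ((q:ℕ) - (p:ℕ)) r p q (by omega) (by omega) (Or.inl (by omega))
      have hrest := ihv (Vm r'') (by omega) (Wm r'') r'' rfl rfl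
      rw [hS] at hrest
      exact hreach.trans hrest
end comb

section sock
lemma canon_le {m n k : ℕ} (hm : 0 < m) (hk : k ≤ m * n) (i : Fin m) :
    canonRank m k i ≤ n := by
  have h1 := Nat.div_add_mod k m
  have h2 : k % m < m := Nat.mod_lt _ hm
  simp only [canonRank]
  split_ifs with h
  · have hs : 1 ≤ k % m := by have := i.isLt; omega
    by_contra hc
    have hnq : n ≤ k / m := by omega
    have hmul : m * n ≤ m * (k / m) := Nat.mul_le_mul_left m hnq
    omega
  · have hle : k / m ≤ (m * n) / m := Nat.div_le_div_right hk
    rw [Nat.mul_div_cancel_left n hm] at hle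
    omega

lemma sock_step (n K : ℕ) {r r' : Fin (K-1) → ℕ} (h : StepRel (K-1) r r') :
    SOCK n K r ⊆ SOCK n K r' := by
  obtain ⟨i0, i1, h01, hne, hr'⟩ := h
  rintro A ⟨P, H, hP, hH1, hH2, rfl⟩
  have hne01 : i0 ≠ i1 := Fin.ne_of_val_ne (by omega)
  obtain ⟨hSP0, hr0⟩ := hP i0
  obtain ⟨hSP1, hr1⟩ := hP i1
  by_cases hlt : r i1 < r i0
  · obtain ⟨P0', P1', ⟨h0i, h0t⟩, ⟨h1i, h1t⟩, hr0', hr1', hprod, hsum⟩ :=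
      transfer_gt (P i0) (P i1) hSP0.1 hSP0.2 hSP1.1 hSP1.2 (by rw [hr0, hr1]; exact hlt)
    refine ⟨Function.update (Function.update P i0 P0') i1 P1', H, ?_, hH1, hH2, ?_⟩
    · intro i
      rcases eq_or_ne i i1 with e | e1
      · subst e
        rw [Function.update_self]
        refine ⟨⟨h1i, h1t⟩, ?_⟩
        rw [hr1', hr1, hr', Function.update_self, if_pos hlt]
      · rcases eq_or_ne i i0 with e | e0
        · subst e
          rw [Function.update_of_ne e1, Function.update_self]
          refine ⟨⟨h0i, h0t⟩, ?_⟩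
          rw [hr0', hr0, hr', Function.update_of_ne e1, Function.update_self, if_pos hlt]
        · rw [Function.update_of_ne e1, Function.update_of_ne e0, hr',
            Function.update_of_ne e1, Function.update_of_ne e0]
          exact hP i
    · apply aker_invariant n K P _ H i0 i1 h01
      · rw [Function.update_of_ne hne01, Function.update_self, Function.update_self]
        exact hprod.symm
      · rw [Function.update_of_ne hne01, Function.update_self, Function.update_self]
        exact hsum.symm
      · intro i hi0 hi1
        rw [Function.update_of_ne hi1, Function.update_of_ne hi0]
  · have hlt' : r i0 < r i1 := by omega
    obtain ⟨P0', P1', ⟨h0i, h0t⟩, ⟨h1i, h1t⟩, hr0', hr1', hprod, hsum⟩ :=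
      transfer_lt (P i0) (P i1) hSP0.1 hSP0.2 hSP1.1 hSP1.2 (by rw [hr0, hr1]; exact hlt')
    refine ⟨Function.update (Function.update P i0 P0') i1 P1', H, ?_, hH1, hH2, ?_⟩
    · intro i
      rcases eq_or_ne i i1 with e | e1
      · subst e
        rw [Function.update_self]
        refine ⟨⟨h1i, h1t⟩, ?_⟩
        rw [hr1', hr1, hr', Function.update_self, if_neg hlt]
      · rcases eq_or_ne i i0 with e | e0
        · subst e
          rw [Function.update_of_ne e1, Function.update_self]
          refine ⟨⟨h0i, h0t⟩, ?_⟩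
          rw [hr0', hr0, hr', Function.update_of_ne e1, Function.update_self, if_neg hlt]
        · rw [Function.update_of_ne e1, Function.update_of_ne e0, hr',
            Function.update_of_ne e1, Function.update_of_ne e0]
          exact hP i
    · apply aker_invariant n K P _ H i0 i1 h01
      · rw [Function.update_of_ne hne01, Function.update_self, Function.update_self]
        exact hprod.symm
      · rw [Function.update_of_ne hne01, Function.update_self, Function.update_self]
        exact hsum.symm
      · intro i hi0 hi1
        rw [Function.update_of_ne hi1, Function.update_of_ne hi0]

lemma sock_reach (n K : ℕ) {r r' : Fin (K-1) → ℕ}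
    (h : Relation.ReflTransGen (StepRel (K-1)) r r') :
    SOCK n K r ⊆ SOCK n K r' := by
  induction h with
  | refl => exact subset_rfl
  | tail _ hbc ih => exact ih.trans (sock_step n K hbc)
end sock

theorem stmt3 (n K : ℕ) (hn : 1 ≤ n) (hK : 2 ≤ K) :
    SOCKall n K = ⋃ k ∈ Finset.range ((K-1) * n + 1), SOCK n K (canonRank (K-1) k) := by
  apply Set.Subset.antisymm
  · intro A hA
    rw [SOCKall, Set.mem_iUnion₂] at hA
    obtain ⟨r, hr, hAr⟩ := hA
    have hrle : ∀ i, r i ≤ n := hr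
    have hkle : (∑ i, r i) ≤ (K-1) * n := by
      calc (∑ i, r i) ≤ ∑ _i : Fin (K-1), n := Finset.sum_le_sum (fun i _ => hrle i)
        _ = (K-1) * n := by
            rw [Finset.sum_const, Finset.card_univ, Fintype.card_fin, smul_eq_mul]
    have hreach := reach_canon (K-1) r
    have hsock := sock_reach n K hreach
    rw [Set.mem_iUnion₂]
    exact ⟨∑ i, r i, Finset.mem_range.mpr (by omega), hsock hAr⟩
  · intro A hA
    rw [Set.mem_iUnion₂] at hA
    obtain ⟨k, hk, hAk⟩ := hA
    rw [SOCKall, Set.mem_iUnion₂]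
    refine ⟨canonRank (K-1) k, ?_, hAk⟩
    intro i
    have hm : 0 < K - 1 := by omega
    have hkle : k ≤ (K-1) * n := by have := Finset.mem_range.mp hk; omega
    exact canon_le hm hkle i
end

section
/- If r is a rank tuple with |r_i − r_j| ≤ 1 for all indices i, j and Σ_i r_i = k, then 𝒞(r) = 𝒞_k. -/
open Matrix

open Module Submodule RealInnerProductSpace Polynomial

abbrev Mat (n : ℕ) := Matrix (Fin n) (Fin n) ℝ

variable {n : ℕ}

lemma expand_prod (m : ℕ) (c : Fin m → Bool → Mat n) :
    ∑ δ : Fin m → Bool, ((List.finRange m).map (fun i => c i (δ i))).prod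
      = ((List.finRange m).map (fun i => c i false + c i true)).prod := by
  induction m with
  | zero => simp
  | succ m ih =>
    rw [Fintype.sum_equiv (Fin.consEquiv (fun _ => Bool)).symm _
      (fun p => (c 0 p.1) * ((List.finRange m).map (fun i => c i.succ (p.2 i))).prod)
      (fun δ => by
        simp [List.finRange_succ, List.map_map, Fin.consEquiv, Function.comp_def, Fin.tail])]
    rw [Fintype.sum_prod_type]
    simp only [← Finset.mul_sum, ← Finset.sum_mul]
    rw [ih (fun i b => c i.succ b)]
    simp [List.finRange_succ, List.map_map, Function.comp_def, Fintype.sum_bool, add_comm]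

lemma weight_smul (m : ℕ) (P : Fin m → Mat n) (z : ℝ) (δ : Fin m → Bool) :
    ((List.finRange m).map (fun i => if δ i then z • ((1:Mat n) - P i) else P i)).prod
      = z ^ (∑ i, if δ i then 1 else 0) •
        ((List.finRange m).map (fun i => if δ i then (1:Mat n) - P i else P i)).prod := by
  induction m with
  | zero => simp
  | succ m ih =>
    rw [List.finRange_succ]
    simp only [List.map_cons, List.map_map, List.prod_cons, Function.comp_def]
    rw [ih (fun i => P i.succ) (fun i => δ i.succ), Fin.sum_univ_succ]
    cases h : δ 0 <;> simp [h, pow_add, smul_smul, smul_mul_assoc, mul_smul_comm, mul_comm]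

noncomputable abbrev tl (n : ℕ) :
    Mat n ≃ₗ[ℝ] (EuclideanSpace ℝ (Fin n) →ₗ[ℝ] EuclideanSpace ℝ (Fin n)) :=
  Matrix.toEuclideanLin

lemma tl_mul (A B : Mat n) : tl n (A * B) = (tl n A) ∘ₗ (tl n B) := by
  simp only [tl, Matrix.toEuclideanLin_eq_toLin, Matrix.toLin_mul _ (PiLp.basisFun 2 ℝ (Fin n)) _]

lemma tl_rank (A : Mat n) : A.rank = finrank ℝ (LinearMap.range (tl n A)) := by
  rw [A.rank_eq_finrank_range_toLin (PiLp.basisFun 2 ℝ (Fin n)) (PiLp.basisFun 2 ℝ (Fin n))]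
  rfl

lemma tl_symm_iff (A : Mat n) : Aᵀ = A ↔ (tl n A).IsSymmetric := by
  rw [show Aᵀ = Aᴴ from by ext i j; simp [Matrix.conjTranspose_apply],
    ← Matrix.isHermitian_iff_isSymmetric]
  exact Iff.rfl

noncomputable def projL (U : Submodule ℝ (EuclideanSpace ℝ (Fin n))) :
    EuclideanSpace ℝ (Fin n) →ₗ[ℝ] EuclideanSpace ℝ (Fin n) :=
  (U.subtypeL ∘L orthogonalProjection U : EuclideanSpace ℝ (Fin n) →L[ℝ] EuclideanSpace ℝ (Fin n))

lemma projL_mem (U : Submodule ℝ (EuclideanSpace ℝ (Fin n))) (x) : projL U x ∈ U := by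
  simp [projL]

lemma projL_eq_self (U : Submodule ℝ (EuclideanSpace ℝ (Fin n))) {x} (hx : x ∈ U) :
    projL U x = x := by
  simp [projL]
  exact congrArg Subtype.val (orthogonalProjection_mem_subspace_eq_self (⟨x, hx⟩ : U))

lemma projL_symm (U : Submodule ℝ (EuclideanSpace ℝ (Fin n))) : (projL U).IsSymmetric :=
  U.starProjection_isSymmetric

lemma projL_range (U : Submodule ℝ (EuclideanSpace ℝ (Fin n))) :
    LinearMap.range (projL U) = U := by
  apply le_antisymm
  · rintro x ⟨y, rfl⟩; exact projL_mem U y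
  · intro x hx; exact ⟨x, projL_eq_self U hx⟩

lemma dim_inter (p q : EuclideanSpace ℝ (Fin n) →ₗ[ℝ] EuclideanSpace ℝ (Fin n)) :
    finrank ℝ (LinearMap.range p ⊓ LinearMap.ker q : Submodule ℝ (EuclideanSpace ℝ (Fin n)))
      + finrank ℝ (LinearMap.range (q ∘ₗ p)) = finrank ℝ (LinearMap.range p) := by
  set S := LinearMap.range p
  set φ : S →ₗ[ℝ] EuclideanSpace ℝ (Fin n) := q ∘ₗ S.subtype
  have h1 := LinearMap.finrank_range_add_finrank_ker φ
  have hrange : LinearMap.range φ = LinearMap.range (q ∘ₗ p) := by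
    rw [LinearMap.range_comp, LinearMap.range_comp, Submodule.range_subtype]
  have hker : finrank ℝ (LinearMap.ker φ) = finrank ℝ (S ⊓ LinearMap.ker q : Submodule ℝ _) := by
    have : LinearMap.ker φ = Submodule.comap S.subtype (LinearMap.ker q) := by
      rw [LinearMap.ker_comp]
    rw [this, ← Submodule.finrank_map_subtype_eq S, Submodule.map_comap_subtype]
  have h2 : finrank ℝ S = finrank ℝ (⊤ : Submodule ℝ S) := (finrank_top ℝ S).symm
  rw [hrange, hker] at h1
  omega

lemma swap_proj (P Q : Mat n) (hP : IsSymProj n P) (hQ : IsSymProj n Q) :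
    ∃ P' Q' : Mat n, IsSymProj n P' ∧ IsSymProj n Q' ∧ P'.rank = Q.rank ∧ Q'.rank = P.rank ∧
      P' + Q' = P + Q ∧ P' * Q' = P * Q := by
  set p : (EuclideanSpace ℝ (Fin n)) →ₗ[ℝ] (EuclideanSpace ℝ (Fin n)) := tl n P with hp
  set q : (EuclideanSpace ℝ (Fin n)) →ₗ[ℝ] (EuclideanSpace ℝ (Fin n)) := tl n Q with hq
  have psymm : p.IsSymmetric := (tl_symm_iff P).1 hP.2
  have qsymm : q.IsSymmetric := (tl_symm_iff Q).1 hQ.2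
  have pp : ∀ x, p (p x) = p x := by
    intro x
    have := congrArg (fun A => tl n A x) hP.1
    simpa [tl_mul] using this
  have qq : ∀ x, q (q x) = q x := by
    intro x
    have := congrArg (fun A => tl n A x) hQ.1
    simpa [tl_mul] using this
  have prange : ∀ y ∈ LinearMap.range p, p y = y := by
    rintro y ⟨x, rfl⟩; exact pp x
  have qrange : ∀ y ∈ LinearMap.range q, q y = y := by
    rintro y ⟨x, rfl⟩; exact qq x
  set U : Submodule ℝ (EuclideanSpace ℝ (Fin n)) := LinearMap.range p ⊓ LinearMap.ker q with hU
  set V : Submodule ℝ (EuclideanSpace ℝ (Fin n)) := LinearMap.range q ⊓ LinearMap.ker p with hV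
  set e : (EuclideanSpace ℝ (Fin n)) →ₗ[ℝ] (EuclideanSpace ℝ (Fin n)) := projL U with he
  set f : (EuclideanSpace ℝ (Fin n)) →ₗ[ℝ] (EuclideanSpace ℝ (Fin n)) := projL V with hf
  have esymm : e.IsSymmetric := projL_symm U
  have fsymm : f.IsSymmetric := projL_symm V
  have ee : ∀ x, e (e x) = e x := fun x => projL_eq_self U (projL_mem U x)
  have ff : ∀ x, f (f x) = f x := fun x => projL_eq_self V (projL_mem V x)
  have pe : ∀ x, p (e x) = e x := fun x => prange _ (projL_mem U x).1
  have qf : ∀ x, q (f x) = f x := fun x => qrange _ (projL_mem V x).1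
  have qe : ∀ x, q (e x) = 0 := fun x => (projL_mem U x).2
  have pf : ∀ x, p (f x) = 0 := fun x => (projL_mem V x).2
  have ep : ∀ x, e (p x) = e x := by
    intro x
    apply ext_inner_right ℝ
    intro v
    rw [esymm, psymm, pe, ← esymm]
  have fq : ∀ x, f (q x) = f x := by
    intro x
    apply ext_inner_right ℝ
    intro v
    rw [fsymm, qsymm, qf, ← fsymm]
  have eq0 : ∀ x, e (q x) = 0 := by
    intro x
    apply ext_inner_right ℝ
    intro v
    rw [esymm, qsymm, qe, inner_zero_right, inner_zero_left]
  have fp : ∀ x, f (p x) = 0 := by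
    intro x
    apply ext_inner_right ℝ
    intro v
    rw [fsymm, psymm, pf, inner_zero_right, inner_zero_left]
  have ef : ∀ x, e (f x) = 0 := by
    intro x
    rw [← qf x, eq0]
  have fe : ∀ x, f (e x) = 0 := by
    intro x
    rw [← pe x, fp]
  -- the new operators
  set p' : (EuclideanSpace ℝ (Fin n)) →ₗ[ℝ] (EuclideanSpace ℝ (Fin n)) := p - e + f with hp'
  set q' : (EuclideanSpace ℝ (Fin n)) →ₗ[ℝ] (EuclideanSpace ℝ (Fin n)) := q - f + e with hq'
  have p'app : ∀ x, p' x = p x - e x + f x := fun x => rfl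
  have q'app : ∀ x, q' x = q x - f x + e x := fun x => rfl
  have p'idem : ∀ x, p' (p' x) = p' x := by
    intro x
    simp only [p'app, map_sub, map_add, pp, pe, pf, ep, ee, ef, fp, fe, ff]
    abel
  have q'idem : ∀ x, q' (q' x) = q' x := by
    intro x
    simp only [q'app, map_sub, map_add, qq, qe, qf, ep, ee, ef, fq, fe, ff, eq0, fp]
    abel
  have p'q' : ∀ x, p' (q' x) = p (q x) := by
    intro x
    simp only [q'app, p'app, map_sub, map_add, pp, pe, pf, ep, ee, ef, fp, fe, ff, eq0, fq]
    abel
  have p'symm : p'.IsSymmetric := (psymm.sub esymm).add fsymm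
  have q'symm : q'.IsSymmetric := (qsymm.sub fsymm).add esymm
  -- rank bookkeeping
  set g : (EuclideanSpace ℝ (Fin n)) →ₗ[ℝ] (EuclideanSpace ℝ (Fin n)) := p - e with hg
  set h : (EuclideanSpace ℝ (Fin n)) →ₗ[ℝ] (EuclideanSpace ℝ (Fin n)) := q - f with hh
  have gapp : ∀ x, g x = p x - e x := fun x => rfl
  have happ : ∀ x, h x = q x - f x := fun x => rfl
  have gg : ∀ x, g (g x) = g x := by
    intro x; simp only [gapp, map_sub, pp, pe, ep, ee]; abel
  have hhid : ∀ x, h (h x) = h x := by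
    intro x; simp only [happ, map_sub, qq, qf, fq, ff]; abel
  have grange_sup : LinearMap.range p = LinearMap.range g ⊔ U := by
    apply le_antisymm
    · rintro y ⟨x, rfl⟩
      have : p x = g x + e x := by rw [gapp]; abel
      rw [this]
      exact Submodule.add_mem_sup (LinearMap.mem_range_self g x) (projL_mem U x)
    · apply sup_le
      · rintro y ⟨x, rfl⟩
        exact ⟨p x - e x, by simp only [map_sub, pp, pe, gapp]⟩
      · intro y hy
        exact hy.1
  have grange_inf : LinearMap.range g ⊓ U = ⊥ := by
    rw [Submodule.eq_bot_iff]
    rintro y ⟨⟨x, rfl⟩, hyU⟩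
    have h1 : e (g x) = 0 := by rw [gapp, map_sub, ep, ee, sub_self]
    have h2 : e (g x) = g x := projL_eq_self U hyU
    rw [h1] at h2; exact h2.symm
  have hrange_sup : LinearMap.range q = LinearMap.range h ⊔ V := by
    apply le_antisymm
    · rintro y ⟨x, rfl⟩
      have : q x = h x + f x := by rw [happ]; abel
      rw [this]
      exact Submodule.add_mem_sup (LinearMap.mem_range_self h x) (projL_mem V x)
    · apply sup_le
      · rintro y ⟨x, rfl⟩
        exact ⟨q x - f x, by simp only [map_sub, qq, qf, happ]⟩
      · intro y hy
        exact hy.1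
  have hrange_inf : LinearMap.range h ⊓ V = ⊥ := by
    rw [Submodule.eq_bot_iff]
    rintro y ⟨⟨x, rfl⟩, hyV⟩
    have h1 : f (h x) = 0 := by rw [happ, map_sub, fq, ff, sub_self]
    have h2 : f (h x) = h x := projL_eq_self V hyV
    rw [h1] at h2; exact h2.symm
  have p'range_sup : LinearMap.range p' = LinearMap.range g ⊔ V := by
    apply le_antisymm
    · rintro y ⟨x, rfl⟩
      have : p' x = g x + f x := by rw [p'app, gapp]
      rw [this]
      exact Submodule.add_mem_sup (LinearMap.mem_range_self g x) (projL_mem V x)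
    · apply sup_le
      · rintro y ⟨x, rfl⟩
        refine ⟨g x, ?_⟩
        simp only [p'app, gapp, map_sub, pp, pe, ep, ee, fp, fe]
        abel
      · intro y hy
        refine ⟨y, ?_⟩
        have h1 : p y = 0 := hy.2
        have h2 : e y = 0 := by rw [← qrange y hy.1, eq0]
        have h3 : f y = y := projL_eq_self V hy
        rw [p'app, h1, h2, h3]; abel
  have p'range_inf : LinearMap.range g ⊓ V = ⊥ := by
    rw [Submodule.eq_bot_iff]
    rintro y ⟨⟨x, rfl⟩, hyV⟩
    have h1 : f (g x) = 0 := by rw [gapp, map_sub, fp, fe, sub_self]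
    have h2 : f (g x) = g x := projL_eq_self V hyV
    rw [h1] at h2; exact h2.symm
  have q'range_sup : LinearMap.range q' = LinearMap.range h ⊔ U := by
    apply le_antisymm
    · rintro y ⟨x, rfl⟩
      have : q' x = h x + e x := by rw [q'app, happ]
      rw [this]
      exact Submodule.add_mem_sup (LinearMap.mem_range_self h x) (projL_mem U x)
    · apply sup_le
      · rintro y ⟨x, rfl⟩
        refine ⟨h x, ?_⟩
        simp only [q'app, happ, map_sub, qq, qf, fq, ff, eq0, ef]
        abel
      · intro y hy
        refine ⟨y, ?_⟩
        have h1 : q y = 0 := hy.2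
        have h2 : f y = 0 := by rw [← prange y hy.1, fp]
        have h3 : e y = y := projL_eq_self U hy
        rw [q'app, h1, h2, h3]; abel
  have q'range_inf : LinearMap.range h ⊓ U = ⊥ := by
    rw [Submodule.eq_bot_iff]
    rintro y ⟨⟨x, rfl⟩, hyU⟩
    have h1 : e (h x) = 0 := by rw [happ, map_sub, eq0, ef, sub_self]
    have h2 : e (h x) = h x := projL_eq_self U hyU
    rw [h1] at h2; exact h2.symm
  -- finrank accounting
  have fr1 : finrank ℝ (LinearMap.range p) = finrank ℝ (LinearMap.range g) + finrank ℝ U := by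
    have := Submodule.finrank_sup_add_finrank_inf_eq (LinearMap.range g) U
    rw [grange_inf, finrank_bot, ← grange_sup] at this
    omega
  have fr2 : finrank ℝ (LinearMap.range q) = finrank ℝ (LinearMap.range h) + finrank ℝ V := by
    have := Submodule.finrank_sup_add_finrank_inf_eq (LinearMap.range h) V
    rw [hrange_inf, finrank_bot, ← hrange_sup] at this
    omega
  have fr3 : finrank ℝ (LinearMap.range p') = finrank ℝ (LinearMap.range g) + finrank ℝ V := by
    have := Submodule.finrank_sup_add_finrank_inf_eq (LinearMap.range g) V
    rw [p'range_inf, finrank_bot, ← p'range_sup] at this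
    omega
  have fr4 : finrank ℝ (LinearMap.range q') = finrank ℝ (LinearMap.range h) + finrank ℝ U := by
    have := Submodule.finrank_sup_add_finrank_inf_eq (LinearMap.range h) U
    rw [q'range_inf, finrank_bot, ← q'range_sup] at this
    omega
  have dimU : finrank ℝ U + finrank ℝ (LinearMap.range (q ∘ₗ p)) = finrank ℝ (LinearMap.range p) :=
    dim_inter p q
  have dimV : finrank ℝ V + finrank ℝ (LinearMap.range (p ∘ₗ q)) = finrank ℝ (LinearMap.range q) :=
    dim_inter q p
  have rqp : finrank ℝ (LinearMap.range (q ∘ₗ p)) = finrank ℝ (LinearMap.range (p ∘ₗ q)) := by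
    have h1 : (Q * P).rank = finrank ℝ (LinearMap.range (q ∘ₗ p)) := by rw [tl_rank, tl_mul]
    have h2 : (P * Q).rank = finrank ℝ (LinearMap.range (p ∘ₗ q)) := by rw [tl_rank, tl_mul]
    have h3 : (Q * P).rank = (P * Q).rank := by
      rw [← Matrix.rank_transpose (Q * P), Matrix.transpose_mul, hP.2, hQ.2]
    omega
  -- back to matrices
  refine ⟨(tl n).symm p', (tl n).symm q', ?_, ?_, ?_, ?_, ?_, ?_⟩
  · constructor
    · apply (tl n).injective
      rw [tl_mul, LinearEquiv.apply_symm_apply]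
      exact LinearMap.ext p'idem
    · rw [tl_symm_iff, LinearEquiv.apply_symm_apply]
      exact p'symm
  · constructor
    · apply (tl n).injective
      rw [tl_mul, LinearEquiv.apply_symm_apply]
      exact LinearMap.ext q'idem
    · rw [tl_symm_iff, LinearEquiv.apply_symm_apply]
      exact q'symm
  · rw [tl_rank, LinearEquiv.apply_symm_apply, tl_rank]
    rw [← hq]
    omega
  · rw [tl_rank, LinearEquiv.apply_symm_apply, tl_rank]
    rw [← hp]
    omega
  · have hpq' : p' + q' = p + q := by
      apply LinearMap.ext
      intro x
      simp only [LinearMap.add_apply, p'app, q'app]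
      abel
    calc (tl n).symm p' + (tl n).symm q' = (tl n).symm (p' + q') := (map_add _ _ _).symm
      _ = (tl n).symm (p + q) := by rw [hpq']
      _ = P + Q := by rw [hp, hq, ← map_add, LinearEquiv.symm_apply_apply]
  · apply (tl n).injective
    rw [tl_mul, tl_mul, LinearEquiv.apply_symm_apply, LinearEquiv.apply_symm_apply, ← hp, ← hq]
    exact LinearMap.ext p'q'

noncomputable def prodF (n m : ℕ) (P : Fin m → Mat n) (z : ℝ) : Mat n :=
  ((List.finRange m).map (fun i => P i + z • ((1:Mat n) - P i))).prod

lemma weight_lt (K : ℕ) (hK : 2 ≤ K) (δ : Fin (K-1) → Bool) :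
    (∑ i, if δ i then 1 else 0) < K := by
  calc (∑ i, if δ i then 1 else 0) ≤ ∑ _i : Fin (K-1), 1 := by
        apply Finset.sum_le_sum; intro i _; split <;> simp
    _ = K - 1 := by simp
    _ < K := by omega


lemma eval_aker (n K : ℕ) (hK : 2 ≤ K) (P : Fin (K-1) → Mat n) (H : Mat n) (z : ℝ) :
    ∑ j : Fin K, z ^ (j:ℕ) • Aker n K P H j = H * prodF n (K-1) P z := by
  set w : (Fin (K-1) → Bool) → ℕ := fun δ => ∑ i, if δ i then 1 else 0 with hw
  set g : (Fin (K-1) → Bool) → Mat n := fun δ =>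
    ((List.finRange (K-1)).map (fun i => if δ i then (1 : Mat n) - P i else P i)).prod with hg
  calc ∑ j : Fin K, z ^ (j:ℕ) • Aker n K P H j
      = ∑ j : Fin K, ∑ δ ∈ Finset.univ.filter
          (fun δ => (⟨w δ, weight_lt K hK δ⟩ : Fin K) = j), z ^ (w δ) • (H * g δ) := by
        apply Finset.sum_congr rfl
        intro j _
        rw [show Finset.univ.filter (fun δ => (⟨w δ, weight_lt K hK δ⟩ : Fin K) = j)
            = Finset.univ.filter (fun δ => w δ = (j:ℕ)) from by
          apply Finset.filter_congr; intro δ _; simp [Fin.ext_iff]]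
        unfold Aker
        rw [Finset.smul_sum]
        apply Finset.sum_congr rfl
        intro δ hδ
        simp only [Finset.mem_filter] at hδ
        rw [← hδ.2]
    _ = ∑ δ : Fin (K-1) → Bool, z ^ (w δ) • (H * g δ) :=
        Finset.sum_fiberwise_of_maps_to (fun δ _ => Finset.mem_univ _) _
    _ = H * ∑ δ : Fin (K-1) → Bool, z ^ (w δ) • g δ := by
        rw [Finset.mul_sum]; simp [mul_smul_comm]
    _ = H * ∑ δ : Fin (K-1) → Bool,
          ((List.finRange (K-1)).map
            (fun i => if δ i then z • ((1:Mat n) - P i) else P i)).prod := by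
        congr 1
        apply Finset.sum_congr rfl
        intro δ _
        rw [weight_smul]
    _ = H * prodF n (K-1) P z := by
        congr 1
        have := expand_prod (n := n) (K-1)
          (fun i b => if b then z • ((1:Mat n) - P i) else P i)
        unfold prodF
        simpa using this

lemma ext_of_eval {n K : ℕ} (A B : Fin K → Mat n)
    (h : ∀ z : ℝ, ∑ j : Fin K, z ^ (j:ℕ) • A j = ∑ j : Fin K, z ^ (j:ℕ) • B j) : A = B := by
  funext j₀
  ext a b
  have key : ∀ C : Fin K → Mat n,
      (∑ j : Fin K, (Polynomial.monomial (j:ℕ) (C j a b) : ℝ[X])).coeff (j₀:ℕ) = C j₀ a b := by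
    intro C
    rw [Polynomial.finset_sum_coeff]
    rw [Finset.sum_eq_single j₀]
    · simp
    · intro j _ hj
      rw [Polynomial.coeff_monomial, if_neg (by simp [Fin.val_eq_val, hj])]
    · simp
  have hpq : (∑ j : Fin K, (Polynomial.monomial (j:ℕ) (A j a b) : ℝ[X]))
      = ∑ j : Fin K, (Polynomial.monomial (j:ℕ) (B j a b) : ℝ[X]) := by
    apply Polynomial.funext
    intro z
    have := congrFun (congrFun (congrArg (fun M => M) (h z)) a) b
    have h2 := h z
    have h3 : (∑ j : Fin K, z ^ (j:ℕ) • A j) a b = (∑ j : Fin K, z ^ (j:ℕ) • B j) a b := by rw [h2]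
    simpa [Polynomial.eval_finset_sum, Finset.sum_apply, Matrix.sum_apply, mul_comm] using h3
  have := key A
  rw [hpq, key B] at this
  exact this.symm

lemma map_prod_update {n m : ℕ} (f f' : Fin m → Mat n) (i : ℕ) (h1 : i + 1 < m)
    (hout : ∀ j : Fin m, (j:ℕ) ≠ i → (j:ℕ) ≠ i+1 → f j = f' j)
    (hpair : f ⟨i, by omega⟩ * f ⟨i+1, h1⟩ = f' ⟨i, by omega⟩ * f' ⟨i+1, h1⟩) :
    ((List.finRange m).map f).prod = ((List.finRange m).map f').prod := by
  set L := List.finRange m with hL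
  have hlen : L.length = m := List.length_finRange
  have hsplit : L = L.take i ++ (⟨i, by omega⟩ : Fin m) :: (⟨i+1, h1⟩ : Fin m) :: L.drop (i+2) := by
    conv_lhs => rw [← List.take_append_drop i L]
    congr 1
    rw [List.drop_eq_getElem_cons (by omega), List.drop_eq_getElem_cons (by omega)]
    simp [hL]
  have htake : ∀ g : Fin m → Mat n, ∀ x ∈ L.take i, True := fun _ _ _ => trivial
  have hmapt : (L.take i).map f = (L.take i).map f' := by
    apply List.map_congr_left
    intro x hx
    obtain ⟨j, hj, rfl⟩ := List.mem_iff_getElem.1 hx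
    have hjlt : j < i := by
      have : (L.take i).length = min i L.length := List.length_take
      omega
    have : (L.take i)[j] = (⟨j, by omega⟩ : Fin m) := by simp [hL]
    rw [this]
    exact hout _ (by simp; omega) (by simp; omega)
  have hmapd : (L.drop (i+2)).map f = (L.drop (i+2)).map f' := by
    apply List.map_congr_left
    intro x hx
    obtain ⟨j, hj, rfl⟩ := List.mem_iff_getElem.1 hx
    have hjlt : i + 2 + j < m := by
      have : (L.drop (i+2)).length = L.length - (i+2) := List.length_drop
      omega
    have : (L.drop (i+2))[j] = (⟨i+2+j, by omega⟩ : Fin m) := by simp [hL]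
    rw [this]
    exact hout _ (by simp; omega) (by simp; omega)
  rw [hsplit]
  simp only [List.map_append, List.map_cons, List.prod_append, List.prod_cons]
  rw [hmapt, hmapd, ← mul_assoc (f ⟨i, by omega⟩), hpair, mul_assoc]

lemma F_mul {n : ℕ} (A B A' B' : Mat n) (hS : A' + B' = A + B) (hM : A' * B' = A * B) (z : ℝ) :
    (A + z • ((1:Mat n) - A)) * (B + z • ((1:Mat n) - B))
      = (A' + z • ((1:Mat n) - A')) * (B' + z • ((1:Mat n) - B')) := by
  have expand : ∀ X Y : Mat n, (X + z • ((1:Mat n) - X)) * (Y + z • ((1:Mat n) - Y))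
      = X * Y + z • ((X + Y) - (X * Y) - (X * Y)) + (z*z) • (1 - (X + Y) + (X * Y)) := by
    intro X Y
    simp only [mul_add, add_mul, smul_mul_assoc, mul_smul_comm, smul_smul, mul_sub, sub_mul,
      mul_one, one_mul, smul_sub, smul_add]
    abel
  rw [expand, expand, hS, hM]

lemma sock_subset_swap (n K : ℕ) (hK : 2 ≤ K) (r : Fin (K-1) → ℕ) (i : ℕ) (h1 : i + 1 < K - 1) :
    SOCK n K r ⊆ SOCK n K (r ∘ Equiv.swap ⟨i, by omega⟩ ⟨i+1, h1⟩) := by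
  rintro A ⟨P, H, hP, hH1, hH2, rfl⟩
  set i0 : Fin (K-1) := ⟨i, by omega⟩ with hi0
  set i1 : Fin (K-1) := ⟨i+1, h1⟩ with hi1
  obtain ⟨P0, P1, hP0, hP1, hr0, hr1, hSum, hMul⟩ :=
    swap_proj (P i0) (P i1) (hP i0).1 (hP i1).1
  set Pn : Fin (K-1) → Mat n := Function.update (Function.update P i0 P0) i1 P1 with hPn
  have hne : i0 ≠ i1 := by simp [hi0, hi1, Fin.ext_iff]
  have hPn0 : Pn i0 = P0 := by
    rw [hPn, Function.update_of_ne hne, Function.update_self]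
  have hPn1 : Pn i1 = P1 := by rw [hPn, Function.update_self]
  have hPnj : ∀ j, j ≠ i0 → j ≠ i1 → Pn j = P j := by
    intro j hj0 hj1
    rw [hPn, Function.update_of_ne hj1, Function.update_of_ne hj0]
  refine ⟨Pn, H, ?_, hH1, hH2, ?_⟩
  · intro j
    by_cases hj1 : j = i1
    · subst hj1
      refine ⟨hPn1 ▸ hP1, ?_⟩
      rw [hPn1, hr1, (hP i0).2]
      simp [Equiv.swap_apply_right]
    by_cases hj0 : j = i0
    · subst hj0
      refine ⟨hPn0 ▸ hP0, ?_⟩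
      rw [hPn0, hr0, (hP i1).2]
      simp [Equiv.swap_apply_left]
    · rw [hPnj j hj0 hj1]
      refine ⟨(hP j).1, ?_⟩
      rw [(hP j).2]
      simp [Equiv.swap_apply_of_ne_of_ne hj0 hj1]
  · apply ext_of_eval
    intro z
    rw [eval_aker n K hK, eval_aker n K hK]
    congr 1
    unfold prodF
    apply map_prod_update _ _ i h1
    · intro j hj0 hj1
      rw [hPnj j (by simp [hi0, Fin.ext_iff, hj0]) (by simp [hi1, Fin.ext_iff, hj1])]
    · show (P i0 + z • (1 - P i0)) * (P i1 + z • (1 - P i1))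
        = (Pn i0 + z • (1 - Pn i0)) * (Pn i1 + z • (1 - Pn i1))
      rw [hPn0, hPn1]
      exact F_mul _ _ _ _ hSum hMul z

lemma sock_swap_eq (n K : ℕ) (hK : 2 ≤ K) (r : Fin (K-1) → ℕ) (i : ℕ) (h1 : i + 1 < K - 1) :
    SOCK n K r = SOCK n K (r ∘ Equiv.swap ⟨i, by omega⟩ ⟨i+1, h1⟩) := by
  apply le_antisymm
  · exact sock_subset_swap n K hK r i h1
  · have := sock_subset_swap n K hK (r ∘ Equiv.swap ⟨i, by omega⟩ ⟨i+1, h1⟩) i h1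
    have h2 : (r ∘ Equiv.swap ⟨i, by omega⟩ ⟨i+1, h1⟩) ∘ Equiv.swap ⟨i, by omega⟩ ⟨i+1, h1⟩ = r := by
      funext j
      simp [Function.comp, Equiv.swap_apply_self]
    rwa [h2] at this

lemma sum_ite_lt (m I : ℕ) (hIm : I ≤ m) :
    (∑ j : Fin m, if (j:ℕ) < I then 1 else 0) = I := by
  rw [Fin.sum_univ_eq_sum_range (fun j => if j < I then 1 else 0) m, ← Finset.sum_filter]
  have : (Finset.range m).filter (fun j => j < I) = Finset.range I := by
    ext x; simp; omega
  rw [this, Finset.sum_const, Finset.card_range, smul_eq_mul, mul_one]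

lemma div_eq_of (m a b : ℕ) (hm : 0 < m) (h1 : m * b ≤ a) (h2 : a < m * b + m) : a / m = b := by
  apply Nat.div_eq_of_lt_le
  · rw [mul_comm]; exact h1
  · rw [Nat.succ_mul, mul_comm b m]; omega

lemma mono_of_adj_s5 {m : ℕ} (g : Fin m → ℕ)
    (h : ∀ i : ℕ, (hi : i + 1 < m) → g ⟨i, by omega⟩ ≤ g ⟨i+1, hi⟩) : Monotone g := by
  have key : ∀ d a (h2 : a + d < m), g ⟨a, by omega⟩ ≤ g ⟨a + d, h2⟩ := by
    intro d
    induction d with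
    | zero => intro a h2; exact le_refl _
    | succ d ih =>
      intro a h2
      calc g ⟨a, by omega⟩ ≤ g ⟨a + d, by omega⟩ := ih a (by omega)
        _ ≤ g ⟨a + d + 1, by omega⟩ := h (a + d) (by omega)
        _ = g ⟨a + (d + 1), by omega⟩ := rfl
  intro a b hab
  have hab' : (a:ℕ) ≤ (b:ℕ) := hab
  have := key ((b:ℕ) - (a:ℕ)) (a:ℕ) (by omega)
  have hb : (⟨(a:ℕ) + ((b:ℕ) - (a:ℕ)), by omega⟩ : Fin m) = b := by
    apply Fin.ext; simp; omega
  have ha : (⟨(a:ℕ), by omega⟩ : Fin m) = a := by apply Fin.ext; simp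
  rwa [hb, ha] at this

lemma monotone_eq_canon {m k : ℕ} (hm : 0 < m) (g : Fin m → ℕ) (hmono : Monotone g)
    (hbal : ∀ a b, g a ≤ g b + 1) (hsum : ∑ j, g j = k) : g = canonRank m k := by
  funext i
  have low : m * g i ≤ k + (i:ℕ) := by
    have h1 : (∑ _j : Fin m, g i) = m * g i := by
      rw [Finset.sum_const, Finset.card_univ, Fintype.card_fin, smul_eq_mul]
    have h2 : (∑ _j : Fin m, g i) ≤ ∑ j : Fin m, (g j + if (j:ℕ) < (i:ℕ) then 1 else 0) := by
      apply Finset.sum_le_sum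
      intro j _
      by_cases hj : (j:ℕ) < (i:ℕ)
      · rw [if_pos hj]; exact hbal i j
      · rw [if_neg hj]
        simp only [add_zero]
        exact hmono (by rw [Fin.le_def]; omega)
    rw [Finset.sum_add_distrib, hsum, sum_ite_lt m i (by omega)] at h2
    omega
  have high : k + (i:ℕ) < m * g i + m := by
    have h2 : (∑ j : Fin m, (g j + if (j:ℕ) < (i:ℕ)+1 then 1 else 0))
        ≤ ∑ _j : Fin m, (g i + 1) := by
      apply Finset.sum_le_sum
      intro j _
      by_cases hj : (j:ℕ) < (i:ℕ)+1
      · rw [if_pos hj]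
        have : g j ≤ g i := hmono (by rw [Fin.le_def]; omega)
        omega
      · rw [if_neg hj]
        have := hbal j i
        omega
    rw [Finset.sum_add_distrib, hsum, sum_ite_lt m ((i:ℕ)+1) (by omega),
      Finset.sum_const, Finset.card_univ, Fintype.card_fin, smul_eq_mul] at h2
    have : m * (g i + 1) = m * g i + m := by ring
    omega
  have hdiv : (k + (i:ℕ)) / m = g i := div_eq_of m _ _ hm low high
  have hcanon : canonRank m k i = (k + (i:ℕ)) / m := by
    obtain ⟨q, s, hmod, hslt, hqeq, hseq⟩ :
        ∃ q s, m * q + s = k ∧ s < m ∧ k / m = q ∧ k % m = s :=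
      ⟨k / m, k % m, Nat.div_add_mod k m, Nat.mod_lt _ hm, rfl, rfl⟩
    unfold canonRank
    rw [hqeq, hseq]
    by_cases hc : m ≤ (i:ℕ) + s
    · rw [if_pos hc]
      symm
      apply div_eq_of m _ _ hm
      · have em : m * (q + 1) = m * q + m := by ring
        omega
      · have em : m * (q + 1) = m * q + m := by ring
        omega
    · rw [if_neg hc]
      simp only [add_zero]
      symm
      apply div_eq_of m _ _ hm
      · omega
      · omega
  omega

lemma sock_canon (n K : ℕ) (hn : 1 ≤ n) (hK : 2 ≤ K) :
    ∀ N (r : Fin (K-1) → ℕ), (∀ i, r i ≤ n) → (∀ a b, r a ≤ r b + 1) →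
      (K-1)*((K-1)*n) ≤ N + ∑ j : Fin (K-1), (j:ℕ) * r j →
      SOCK n K r = SOCK n K (canonRank (K-1) (∑ j : Fin (K-1), r j)) := by
  intro N
  induction N with
  | zero =>
    intro r hr hbal hmeas
    exfalso
    have hub : ∑ j : Fin (K-1), (j:ℕ) * r j ≤ (K-1)*((K-2)*n) := by
      calc ∑ j : Fin (K-1), (j:ℕ) * r j ≤ ∑ _j : Fin (K-1), (K-2)*n := by
            apply Finset.sum_le_sum
            intro j _
            exact Nat.mul_le_mul (by have := j.isLt; omega) (hr j)
        _ = (K-1)*((K-2)*n) := by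
            rw [Finset.sum_const, Finset.card_univ, Fintype.card_fin, smul_eq_mul]
    have e1 : K - 1 = (K-2) + 1 := by omega
    have e2 : (K-1)*n = (K-2)*n + n := by rw [e1, Nat.succ_mul]
    have e3 : (K-1)*((K-2)*n + n) = (K-1)*((K-2)*n) + (K-1)*n := by ring
    have e4 : 0 < (K-1)*n := Nat.mul_pos (by omega) (by omega)
    rw [e2, e3] at hmeas
    omega
  | succ N ih =>
    intro r hr hbal hmeas
    by_cases hmono : Monotone r
    · exact congrArg (SOCK n K) (monotone_eq_canon (by omega) r hmono hbal rfl)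
    · have hdesc : ∃ i : ℕ, ∃ hi : i + 1 < K - 1, r ⟨i+1, hi⟩ < r ⟨i, by omega⟩ := by
        by_contra hcon
        push_neg at hcon
        exact hmono (mono_of_adj_s5 r (fun i hi => hcon i hi))
      obtain ⟨i, hi, hlt⟩ := hdesc
      set i0 : Fin (K-1) := ⟨i, by omega⟩ with hi0
      set i1 : Fin (K-1) := ⟨i+1, hi⟩ with hi1
      set σ := Equiv.swap i0 i1 with hσ
      set r' : Fin (K-1) → ℕ := r ∘ σ with hr'
      have hne : i1 ≠ i0 := by simp [hi0, hi1, Fin.ext_iff]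
      have hr'0 : r' i0 = r i1 := by simp [hr', hσ, Equiv.swap_apply_left]
      have hr'1 : r' i1 = r i0 := by simp [hr', hσ, Equiv.swap_apply_right]
      have hr'j : ∀ j, j ≠ i0 → j ≠ i1 → r' j = r j := by
        intro j hj0 hj1
        simp [hr', hσ, Equiv.swap_apply_of_ne_of_ne hj0 hj1]
      have hsum' : ∑ j : Fin (K-1), r' j = ∑ j : Fin (K-1), r j := Equiv.sum_comp σ r
      have hmem1 : i1 ∈ Finset.univ.erase i0 := Finset.mem_erase.2 ⟨hne, Finset.mem_univ _⟩
      have decomp : ∀ g : Fin (K-1) → ℕ, ∑ j : Fin (K-1), (j:ℕ) * g j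
          = (i0:ℕ) * g i0 + ((i1:ℕ) * g i1
            + ∑ j ∈ (Finset.univ.erase i0).erase i1, (j:ℕ) * g j) := by
        intro g
        rw [Finset.add_sum_erase (Finset.univ.erase i0) (fun j : Fin (K-1) => (j:ℕ) * g j) hmem1,
          Finset.add_sum_erase Finset.univ (fun j : Fin (K-1) => (j:ℕ) * g j) (Finset.mem_univ i0)]
      have htail : ∑ j ∈ (Finset.univ.erase i0).erase i1, (j:ℕ) * r' j
          = ∑ j ∈ (Finset.univ.erase i0).erase i1, (j:ℕ) * r j := by
        apply Finset.sum_congr rfl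
        intro j hj
        have hj1 : j ≠ i1 := (Finset.mem_erase.1 hj).1
        have hj0 : j ≠ i0 := (Finset.mem_erase.1 (Finset.mem_erase.1 hj).2).1
        rw [hr'j j hj0 hj1]
      have hwinc : ∑ j : Fin (K-1), (j:ℕ) * r j + 1 ≤ ∑ j : Fin (K-1), (j:ℕ) * r' j := by
        rw [decomp r, decomp r', htail, hr'0, hr'1]
        have hv0 : (i0:ℕ) = i := rfl
        have hv1 : (i1:ℕ) = i + 1 := rfl
        rw [hv0, hv1]
        have e1 : (i+1) * r i1 = i * r i1 + r i1 := Nat.succ_mul _ _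
        have e2 : (i+1) * r i0 = i * r i0 + r i0 := Nat.succ_mul _ _
        omega
      have ih' := ih r' (fun j => hr (σ j)) (fun a b => hbal (σ a) (σ b)) (by omega)
      rw [hsum'] at ih'
      rw [← ih']
      exact sock_swap_eq n K hK r i hi


theorem stmt5 (n K : ℕ) (hn : 1 ≤ n) (hK : 2 ≤ K)
    (r : Fin (K-1) → ℕ) (hr : ∀ i, r i ≤ n)
    (hbal : ∀ i j, |(r i : ℤ) - (r j : ℤ)| ≤ 1)
    (k : ℕ) (hsum : ∑ i, r i = k) :
    SOCK n K r = SOCK n K (canonRank (K-1) k) := by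
  have hbal' : ∀ a b, r a ≤ r b + 1 := by
    intro a b
    have := hbal a b
    rw [abs_le] at this
    omega
  have hmain := sock_canon n K hn hK ((K-1)*((K-1)*n)) r hr hbal'
    (Nat.le_add_right _ _)
  rwa [hsum] at hmain
end

section
/- If r is a rank tuple for which there exist indices i, j with |r_i − r_j| ≥ 2, then there exists a rank tuple r' with Σ_i r'_i = Σ_i r_i, 𝒞(r) ⊆ 𝒞(r'), and Σ_i (r'_i)² < Σ_i (r_i)². -/
open Matrix

open Polynomial

section Aux

variable {n : ℕ}

lemma vmv_mul (v w : Fin n → ℝ) (M : Matrix (Fin n) (Fin n) ℝ) :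
    vecMulVec v w * M = vecMulVec v (vecMul w M) := by
  ext i j
  simp [vecMulVec_apply, mul_apply, vecMul, dotProduct, Finset.mul_sum, mul_assoc]

lemma mul_vmv (v w : Fin n → ℝ) (M : Matrix (Fin n) (Fin n) ℝ) :
    M * vecMulVec v w = vecMulVec (M.mulVec v) w := by
  ext i j
  simp only [vecMulVec_apply, mul_apply, mulVec, dotProduct, Finset.sum_mul]
  congr 1; ext k; ring

lemma trace_vmv (v w : Fin n → ℝ) : (vecMulVec v w).trace = v ⬝ᵥ w := by
  simp [Matrix.trace, Matrix.diag, vecMulVec_apply, dotProduct]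

lemma rank_eq_trace {M : Matrix (Fin n) (Fin n) ℝ} (h : M * M = M) :
    (M.rank : ℝ) = M.trace := by
  have hproj : LinearMap.IsProj (LinearMap.range M.mulVecLin) M.mulVecLin := by
    constructor
    · intro x; exact ⟨x, rfl⟩
    · rintro x ⟨y, rfl⟩
      change M.mulVec (M.mulVec y) = _
      rw [Matrix.mulVec_mulVec, h]; rfl
  have := hproj.trace
  rw [LinearMap.trace_eq_matrix_trace ℝ (Pi.basisFun ℝ (Fin n))] at this
  rw [Matrix.rank, ← this]
  congr 1
  change LinearMap.toMatrix' _ = M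
  ext i j
  simp [LinearMap.toMatrix'_apply, Matrix.mulVecLin, Matrix.mulVec, dotProduct, Pi.single_apply]

lemma exists_unit_vec {P Q : Matrix (Fin n) (Fin n) ℝ} (hP : IsSymProj n P)
    (hQ : IsSymProj n Q) (h : Q.rank < P.rank) :
    ∃ v : Fin n → ℝ, P.mulVec v = v ∧ Q.mulVec v = 0 ∧ v ⬝ᵥ v = 1 := by
  set U := LinearMap.range P.mulVecLin
  set W := LinearMap.ker Q.mulVecLin
  have hn : Module.finrank ℝ (Fin n → ℝ) = n := by simp
  have hU : Module.finrank ℝ U = P.rank := rfl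
  have hW : Q.rank + Module.finrank ℝ W = n := by
    have := LinearMap.finrank_range_add_finrank_ker Q.mulVecLin
    rw [hn] at this; exact this
  have hsum := Submodule.finrank_sup_add_finrank_inf_eq U W
  have hle : Module.finrank ℝ ↥(U ⊔ W) ≤ n := by have := Submodule.finrank_le (U ⊔ W); rwa [hn] at this
  have hpos : 0 < Module.finrank ℝ ↥(U ⊓ W) := by omega
  have hne : U ⊓ W ≠ ⊥ := by
    intro hbot
    rw [hbot, finrank_bot] at hpos; omega
  obtain ⟨w, hw, hw0⟩ := Submodule.exists_mem_ne_zero_of_ne_bot hne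
  have hwU : P.mulVec w = w := by
    obtain ⟨y, hy⟩ := hw.1
    have : P.mulVec (P.mulVec y) = P.mulVec y := by
      rw [Matrix.mulVec_mulVec, hP.1]
    rw [show P.mulVecLin y = P.mulVec y from rfl] at hy
    rw [← hy]; exact this
  have hwW : Q.mulVec w = 0 := hw.2
  have hnn : 0 ≤ w ⬝ᵥ w := by
    simp only [dotProduct]
    exact Finset.sum_nonneg fun i _ => mul_self_nonneg _
  have hdot : 0 < w ⬝ᵥ w := by
    rcases lt_or_eq_of_le hnn with h'|h'
    · exact h'
    · exact absurd (dotProduct_self_eq_zero.mp h'.symm) hw0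
  refine ⟨(Real.sqrt (w ⬝ᵥ w))⁻¹ • w, ?_, ?_, ?_⟩
  · rw [Matrix.mulVec_smul, hwU]
  · rw [Matrix.mulVec_smul, hwW, smul_zero]
  · rw [smul_dotProduct, dotProduct_smul, smul_eq_mul, smul_eq_mul]
    rw [← mul_assoc, ← mul_inv, Real.mul_self_sqrt hnn, inv_mul_cancel₀ (ne_of_gt hdot)]


lemma coeff_prod_boolsum {R : Type*} [Semiring R] (m : ℕ) (F G : Fin m → R) (j : ℕ) :
    ∑ δ ∈ Finset.univ.filter
        (fun δ : Fin m → Bool => (∑ i, (if δ i then 1 else 0)) = j),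
      ((List.finRange m).map (fun i => if δ i then G i else F i)).prod
    = (((List.finRange m).map
        (fun i => Polynomial.C (F i) + Polynomial.X * Polynomial.C (G i))).prod).coeff j := by
  induction m generalizing j with
  | zero =>
    simp only [List.finRange_zero, List.map_nil, List.prod_nil, Polynomial.coeff_one]
    rcases eq_or_ne j 0 with rfl | hj
    · rw [Finset.filter_true_of_mem (by simp), if_pos rfl]
      simp
    · rw [Finset.filter_false_of_mem (by simp [hj.symm, (Ne.symm hj)])]
      simp [hj]
  | succ m ih =>
    rw [Finset.sum_filter]
    rw [← Equiv.sum_comp (Fin.consEquiv (fun _ : Fin (m+1) => Bool))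
      (fun δ => if (∑ i, (if δ i then 1 else 0)) = j then
        ((List.finRange (m+1)).map (fun i => if δ i then G i else F i)).prod else 0)]
    rw [Fintype.sum_prod_type]
    have hw : ∀ (b : Bool) (δ' : Fin m → Bool),
        (∑ i, (if (Fin.consEquiv (fun _ : Fin (m+1) => Bool)) (b, δ') i then (1:ℕ) else 0))
          = (if b then 1 else 0) + ∑ i, (if δ' i then 1 else 0) := by
      intro b δ'
      rw [Fin.sum_univ_succ]
      simp [Fin.consEquiv]
    have hp : ∀ (b : Bool) (δ' : Fin m → Bool),
        ((List.finRange (m+1)).map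
          (fun i => if (Fin.consEquiv (fun _ : Fin (m+1) => Bool)) (b, δ') i then G i else F i)).prod
        = (if b then G 0 else F 0) *
          ((List.finRange m).map (fun i => if δ' i then G i.succ else F i.succ)).prod := by
      intro b δ'
      rw [List.finRange_succ, List.map_cons, List.prod_cons, List.map_map]
      simp [Fin.consEquiv, Function.comp_def]
    simp only [hw, hp]
    rw [List.finRange_succ, List.map_cons, List.prod_cons, List.map_map]
    rw [Fintype.sum_bool]
    rw [add_mul, Polynomial.coeff_add, Polynomial.coeff_C_mul]
    have hcomp : ((fun i : Fin (m+1) => Polynomial.C (F i) + Polynomial.X * Polynomial.C (G i)) ∘ Fin.succ)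
        = fun i : Fin m => Polynomial.C (F i.succ) + Polynomial.X * Polynomial.C (G i.succ) := rfl
    rw [hcomp]
    set Prest : Polynomial R := ((List.finRange m).map
      (fun i : Fin m => Polynomial.C (F i.succ) + Polynomial.X * Polynomial.C (G i.succ))).prod with hPrest
    have efalse : (∑ δ' : Fin m → Bool,
        if ((if (false : Bool) = true then (1:ℕ) else 0) + ∑ i, (if δ' i then (1:ℕ) else 0)) = j then
          (if (false : Bool) = true then G 0 else F 0) *
            ((List.finRange m).map (fun i => if δ' i then G i.succ else F i.succ)).prod
        else 0) = F 0 * Prest.coeff j := by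
      simp only [Bool.false_eq_true, if_false, Nat.zero_add]
      rw [← ih (fun i => F i.succ) (fun i => G i.succ) j, Finset.sum_filter, Finset.mul_sum]
      refine Finset.sum_congr rfl fun δ' _ => ?_
      rw [mul_ite, mul_zero]
    have etrue : (∑ δ' : Fin m → Bool,
        if ((if (true : Bool) = true then (1:ℕ) else 0) + ∑ i, (if δ' i then (1:ℕ) else 0)) = j then
          (if (true : Bool) = true then G 0 else F 0) *
            ((List.finRange m).map (fun i => if δ' i then G i.succ else F i.succ)).prod
        else 0) = (Polynomial.X * (Polynomial.C (G 0) * Prest)).coeff j := by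
      simp only [eq_self_iff_true, if_true]
      cases j with
      | zero =>
        rw [Polynomial.mul_coeff_zero, Polynomial.coeff_X_zero, zero_mul]
        apply Finset.sum_eq_zero
        intro δ' _
        rw [if_neg (by omega)]
      | succ j' =>
        rw [Polynomial.coeff_X_mul, Polynomial.coeff_C_mul]
        rw [← ih (fun i => F i.succ) (fun i => G i.succ) j', Finset.sum_filter, Finset.mul_sum]
        refine Finset.sum_congr rfl fun δ' _ => ?_
        rw [mul_ite, mul_zero]
        exact if_congr (by omega) rfl rfl
    rw [efalse, etrue, mul_assoc, add_comm]

lemma expand_linpair {R : Type*} [Ring R] (a b c d : R) :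
    (C a + X * C b) * (C c + X * C d)
      = C (a * c) + X * C (a * d + b * c) + X^2 * C (b * d) := by
  have e2 : C a * (X * C d) = X * C (a * d) := by
    rw [← mul_assoc, ← X_mul, mul_assoc, ← C_mul]
  have e3 : X * C b * C c = X * C (b * c) := by rw [mul_assoc, ← C_mul]
  have e4 : X * C b * (X * C d) = X ^ 2 * C (b * d) := by
    rw [mul_assoc, ← mul_assoc (C b) X (C d), ← X_mul, mul_assoc X (C b) (C d), ← C_mul,
      ← mul_assoc, ← sq]
  rw [add_mul, mul_add, mul_add, ← C_mul, e2, e3, e4, C_add, mul_add]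
  abel

lemma pair_poly {R : Type*} [Ring R] (a b a' b' : R)
    (h1 : a' * b' = a * b) (h2 : (1 - a') * (1 - b') = (1 - a) * (1 - b)) :
    (C a' + X * C (1 - a')) * (C b' + X * C (1 - b'))
      = (C a + X * C (1 - a)) * (C b + X * C (1 - b)) := by
  have h3 : a' + b' = a + b := by
    have e : 1 - b' - a' + a' * b' = 1 - b - a + a * b := by
      calc 1 - b' - a' + a' * b' = (1 - a') * (1 - b') := by noncomm_ring
        _ = (1 - a) * (1 - b) := h2
        _ = 1 - b - a + a * b := by noncomm_ring
    rw [h1] at e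
    have h4 : (1:R) - b' - a' = 1 - b - a := add_right_cancel e
    calc a' + b' = 1 - (1 - b' - a') := by abel
      _ = 1 - (1 - b - a) := by rw [h4]
      _ = a + b := by abel
  rw [expand_linpair, expand_linpair]
  have m1 : a' * (1 - b') + (1 - a') * b' = a * (1 - b) + (1 - a) * b := by
    have : a' * (1 - b') + (1 - a') * b' = (a' + b') - (a' * b' + a' * b') := by noncomm_ring
    rw [this, h1, h3]
    noncomm_ring
  have m2 : (1 - a') * (1 - b') = (1 - a) * (1 - b) := h2
  rw [h1, m1, m2]
variable {n : ℕ}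

lemma vecMul_vmv (u v w : Fin n → ℝ) : vecMul u (vecMulVec v w) = (u ⬝ᵥ v) • w := by
  ext j
  simp only [vecMul, vecMulVec_apply, dotProduct, Pi.smul_apply, smul_eq_mul, Finset.sum_mul]
  congr 1; ext i; ring

lemma transpose_vmv (v w : Fin n → ℝ) : (vecMulVec v w)ᵀ = vecMulVec w v := by
  ext i j; simp [vecMulVec_apply, mul_comm]

lemma vmv_zero_left (w : Fin n → ℝ) : vecMulVec (0 : Fin n → ℝ) w = 0 := by
  ext i j; simp [vecMulVec_apply]

lemma vmv_zero_right (v : Fin n → ℝ) : vecMulVec v (0 : Fin n → ℝ) = 0 := by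
  ext i j; simp [vecMulVec_apply]

lemma moveL {P Q : Matrix (Fin n) (Fin n) ℝ} (hP : IsSymProj n P) (hQ : IsSymProj n Q)
    (hrank : Q.rank < P.rank) :
    ∃ P' Q' : Matrix (Fin n) (Fin n) ℝ, IsSymProj n P' ∧ IsSymProj n Q' ∧
      P'.rank + 1 = P.rank ∧ Q'.rank = Q.rank + 1 ∧
      P' * Q' = P * Q ∧ (1 - P') * (1 - Q') = (1 - P) * (1 - Q) := by
  obtain ⟨v, hPv, hQv, hv⟩ := exists_unit_vec hP hQ hrank
  set E : Matrix (Fin n) (Fin n) ℝ := vecMulVec v v with hE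
  have hvP : vecMul v P = v := by rw [← hP.2, vecMul_transpose, hPv]
  have hvQ : vecMul v Q = 0 := by rw [← hQ.2, vecMul_transpose, hQv]
  have PE : P * E = E := by rw [hE, mul_vmv, hPv]
  have EP : E * P = E := by rw [hE, vmv_mul, hvP]
  have QE : Q * E = 0 := by rw [hE, mul_vmv, hQv, vmv_zero_left]
  have EQ : E * Q = 0 := by rw [hE, vmv_mul, hvQ, vmv_zero_right]
  have EE : E * E = E := by rw [hE, vmv_mul, vecMul_vmv, hv, one_smul]
  have hEt : Eᵀ = E := by rw [hE, transpose_vmv]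
  have htE : E.trace = 1 := by rw [hE, trace_vmv, hv]
  refine ⟨P - E, Q + E, ⟨?_, ?_⟩, ⟨?_, ?_⟩, ?_, ?_, ?_, ?_⟩
  · rw [sub_mul, mul_sub, mul_sub, hP.1, PE, EP, EE]; abel
  · rw [transpose_sub, hP.2, hEt]
  · rw [add_mul, mul_add, mul_add, hQ.1, QE, EQ, EE]; abel
  · rw [transpose_add, hQ.2, hEt]
  · have h1 : ((P - E).rank : ℝ) = (P.rank : ℝ) - 1 := by
      rw [rank_eq_trace (by rw [sub_mul, mul_sub, mul_sub, hP.1, PE, EP, EE]; abel),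
        Matrix.trace_sub, htE, rank_eq_trace hP.1]
    have h2 : (((P - E).rank + 1 : ℕ) : ℝ) = ((P.rank : ℕ) : ℝ) := by
      push_cast
      linarith
    exact_mod_cast h2
  · have h1 : ((Q + E).rank : ℝ) = (Q.rank : ℝ) + 1 := by
      rw [rank_eq_trace (by rw [add_mul, mul_add, mul_add, hQ.1, QE, EQ, EE]; abel),
        Matrix.trace_add, htE, rank_eq_trace hQ.1]
    exact_mod_cast h1
  · rw [sub_mul, mul_add, mul_add, PE, EQ, EE]; abel
  · have ha : (1 : Matrix (Fin n) (Fin n) ℝ) - (P - E) = (1 - P) + E := by abel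
    have hb : (1 : Matrix (Fin n) (Fin n) ℝ) - (Q + E) = (1 - Q) - E := by abel
    have h5 : ((1 : Matrix (Fin n) (Fin n) ℝ) - P) * E = 0 := by
      rw [sub_mul, one_mul, PE, sub_self]
    have h6 : E * ((1 : Matrix (Fin n) (Fin n) ℝ) - Q) = E := by
      rw [mul_sub, mul_one, EQ, sub_zero]
    rw [ha, hb, add_mul, mul_sub (1 - P) (1 - Q) E, mul_sub E (1 - Q) E, h5, h6, EE]
    abel

lemma moveR {P Q : Matrix (Fin n) (Fin n) ℝ} (hP : IsSymProj n P) (hQ : IsSymProj n Q)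
    (hrank : P.rank < Q.rank) :
    ∃ P' Q' : Matrix (Fin n) (Fin n) ℝ, IsSymProj n P' ∧ IsSymProj n Q' ∧
      P'.rank = P.rank + 1 ∧ Q'.rank + 1 = Q.rank ∧
      P' * Q' = P * Q ∧ (1 - P') * (1 - Q') = (1 - P) * (1 - Q) := by
  obtain ⟨v, hQv, hPv, hv⟩ := exists_unit_vec hQ hP hrank
  set E : Matrix (Fin n) (Fin n) ℝ := vecMulVec v v with hE
  have hvP : vecMul v P = 0 := by rw [← hP.2, vecMul_transpose, hPv]
  have hvQ : vecMul v Q = v := by rw [← hQ.2, vecMul_transpose, hQv]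
  have PE : P * E = 0 := by rw [hE, mul_vmv, hPv, vmv_zero_left]
  have EP : E * P = 0 := by rw [hE, vmv_mul, hvP, vmv_zero_right]
  have QE : Q * E = E := by rw [hE, mul_vmv, hQv]
  have EQ : E * Q = E := by rw [hE, vmv_mul, hvQ]
  have EE : E * E = E := by rw [hE, vmv_mul, vecMul_vmv, hv, one_smul]
  have hEt : Eᵀ = E := by rw [hE, transpose_vmv]
  have htE : E.trace = 1 := by rw [hE, trace_vmv, hv]
  refine ⟨P + E, Q - E, ⟨?_, ?_⟩, ⟨?_, ?_⟩, ?_, ?_, ?_, ?_⟩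
  · rw [add_mul, mul_add, mul_add, hP.1, PE, EP, EE]; abel
  · rw [transpose_add, hP.2, hEt]
  · rw [sub_mul, mul_sub, mul_sub, hQ.1, QE, EQ, EE]; abel
  · rw [transpose_sub, hQ.2, hEt]
  · have h1 : ((P + E).rank : ℝ) = (P.rank : ℝ) + 1 := by
      rw [rank_eq_trace (by rw [add_mul, mul_add, mul_add, hP.1, PE, EP, EE]; abel),
        Matrix.trace_add, htE, rank_eq_trace hP.1]
    exact_mod_cast h1
  · have h1 : ((Q - E).rank : ℝ) = (Q.rank : ℝ) - 1 := by
      rw [rank_eq_trace (by rw [sub_mul, mul_sub, mul_sub, hQ.1, QE, EQ, EE]; abel),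
        Matrix.trace_sub, htE, rank_eq_trace hQ.1]
    have h2 : (((Q - E).rank + 1 : ℕ) : ℝ) = ((Q.rank : ℕ) : ℝ) := by
      push_cast
      linarith
    exact_mod_cast h2
  · rw [add_mul, mul_sub, mul_sub, PE, EQ, EE]; abel
  · have ha : (1 : Matrix (Fin n) (Fin n) ℝ) - (P + E) = (1 - P) - E := by abel
    have hb : (1 : Matrix (Fin n) (Fin n) ℝ) - (Q - E) = (1 - Q) + E := by abel
    have h5 : ((1 : Matrix (Fin n) (Fin n) ℝ) - P) * E = E := by
      rw [sub_mul, one_mul, PE, sub_zero]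
    have h6 : E * ((1 : Matrix (Fin n) (Fin n) ℝ) - Q) = 0 := by
      rw [mul_sub, mul_one, EQ, sub_self]
    rw [ha, hb, sub_mul, mul_add (1 - P) (1 - Q) E, mul_add E (1 - Q) E, h5, h6, EE]
    abel


lemma mem_take_lt {m t : ℕ} {a : Fin m} (ha : a ∈ (List.finRange m).take t) : (a:ℕ) < t := by
  rw [List.mem_iff_getElem] at ha
  obtain ⟨k, hk, hgk⟩ := ha
  have hk' : k < t := by
    have := hk
    simp only [List.length_take, List.length_finRange] at this
    omega
  have : (List.finRange m).take t = (List.finRange m).take t := rfl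
  rw [List.getElem_take] at hgk
  rw [List.getElem_finRange] at hgk
  rw [← hgk]
  simpa using hk'

lemma mem_drop_ge {m t : ℕ} {a : Fin m} (ha : a ∈ (List.finRange m).drop t) : t ≤ (a:ℕ) := by
  rw [List.mem_iff_getElem] at ha
  obtain ⟨k, hk, hgk⟩ := ha
  rw [List.getElem_drop] at hgk
  rw [List.getElem_finRange] at hgk
  rw [← hgk]
  simp

lemma splice_finRange (m t : ℕ) (h1 : t < m) (h2 : t + 1 < m) :
    List.finRange m = (List.finRange m).take t
      ++ (⟨t, h1⟩ : Fin m) :: (⟨t+1, h2⟩ : Fin m) :: (List.finRange m).drop (t+2) := by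
  conv_lhs => rw [← List.take_append_drop t (List.finRange m)]
  congr 1
  rw [List.drop_eq_getElem_cons (by simpa using h1)]
  congr 1
  · simp [List.getElem_finRange, Fin.ext_iff]
  rw [List.drop_eq_getElem_cons (by simpa using h2)]
  congr 1
  · simp [List.getElem_finRange, Fin.ext_iff]

lemma prod_splice {M : Type*} [Monoid M] {m : ℕ} (p q : Fin m) (hq : (q:ℕ) = (p:ℕ)+1)
    (f g : Fin m → M)
    (hfg : ∀ a : Fin m, a ≠ p → a ≠ q → f a = g a)
    (hmid : f p * f q = g p * g q) :
    ((List.finRange m).map f).prod = ((List.finRange m).map g).prod := by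
  have h1 : (p:ℕ) < m := p.isLt
  have h2 : (p:ℕ) + 1 < m := hq ▸ q.isLt
  have hp : (⟨(p:ℕ), h1⟩ : Fin m) = p := rfl
  have hqq : (⟨(p:ℕ)+1, h2⟩ : Fin m) = q := by
    apply Fin.ext; simp [hq]
  have htake : ((List.finRange m).take (p:ℕ)).map f = ((List.finRange m).take (p:ℕ)).map g := by
    apply List.map_congr_left
    intro a ha
    have := mem_take_lt ha
    exact hfg a (fun h => by subst h; omega) (fun h => by subst h; omega)
  have hdrop : ((List.finRange m).drop ((p:ℕ)+2)).map f
      = ((List.finRange m).drop ((p:ℕ)+2)).map g := by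
    apply List.map_congr_left
    intro a ha
    have := mem_drop_ge ha
    exact hfg a (fun h => by subst h; omega) (fun h => by subst h; omega)
  rw [splice_finRange m (p:ℕ) h1 h2]
  rw [List.map_append, List.map_cons, List.map_cons, List.map_append, List.map_cons, List.map_cons]
  rw [List.prod_append, List.prod_cons, List.prod_cons, List.prod_append, List.prod_cons,
    List.prod_cons]
  rw [htake, hdrop, hp, hqq, ← mul_assoc (f p) (f q), ← mul_assoc (g p) (g q), hmid]

lemma Aker_coeff (n K : ℕ) (P : Fin (K-1) → Matrix (Fin n) (Fin n) ℝ)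
    (H : Matrix (Fin n) (Fin n) ℝ) (j : Fin K) :
    Aker n K P H j = H * ((((List.finRange (K-1)).map
      (fun i => Polynomial.C (P i) + Polynomial.X * Polynomial.C (1 - P i))).prod).coeff (j:ℕ)) := by
  rw [Aker, ← coeff_prod_boolsum (K-1) P (fun i => 1 - P i) (j:ℕ), Finset.mul_sum]

lemma sock_moveL (n K : ℕ) (r : Fin (K-1) → ℕ) (p q : Fin (K-1)) (hq : (q:ℕ) = (p:ℕ)+1)
    (hlt : r q < r p) :
    SOCK n K r ⊆ SOCK n K (Function.update (Function.update r p (r p - 1)) q (r q + 1)) := by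
  intro A hA
  obtain ⟨P, H, hPr, hH, hdet, hAeq⟩ := hA
  have hpq : p ≠ q := fun h => by rw [h] at hq; omega
  have hrank : (P q).rank < (P p).rank := by
    rw [(hPr q).2, (hPr p).2]; exact hlt
  obtain ⟨P', Q', hP', hQ', hrP', hrQ', hprod, hprod1⟩ := moveL (hPr p).1 (hPr q).1 hrank
  set P'' := Function.update (Function.update P p P') q Q' with hP''
  have hPp : P'' p = P' := by
    rw [hP'', Function.update_of_ne hpq, Function.update_self]
  have hPq : P'' q = Q' := by rw [hP'', Function.update_self]
  refine ⟨P'', H, ?_, hH, hdet, ?_⟩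
  · intro i
    by_cases hiq : i = q
    · subst hiq
      refine ⟨hPq ▸ hQ', ?_⟩
      rw [hPq, hrQ', (hPr i).2, Function.update_self]
    by_cases hip : i = p
    · subst hip
      refine ⟨hPp ▸ hP', ?_⟩
      rw [hPp, Function.update_of_ne hiq, Function.update_self]
      have := hrP'
      rw [(hPr i).2] at this
      omega
    · have hPi : P'' i = P i := by
        rw [hP'', Function.update_of_ne hiq, Function.update_of_ne hip]
      refine ⟨hPi ▸ (hPr i).1, ?_⟩
      rw [hPi, Function.update_of_ne hiq, Function.update_of_ne hip]
      exact (hPr i).2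
  · rw [hAeq]
    funext j
    rw [Aker_coeff, Aker_coeff]
    congr 2
    apply prod_splice p q hq
    · intro a hap haq
      rw [hP'', Function.update_of_ne haq, Function.update_of_ne hap]
    · rw [hPp, hPq]
      exact (pair_poly (P p) (P q) P' Q' hprod hprod1).symm

lemma sock_moveR (n K : ℕ) (r : Fin (K-1) → ℕ) (p q : Fin (K-1)) (hq : (q:ℕ) = (p:ℕ)+1)
    (hlt : r p < r q) :
    SOCK n K r ⊆ SOCK n K (Function.update (Function.update r p (r p + 1)) q (r q - 1)) := by
  intro A hA
  obtain ⟨P, H, hPr, hH, hdet, hAeq⟩ := hA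
  have hpq : p ≠ q := fun h => by rw [h] at hq; omega
  have hrank : (P p).rank < (P q).rank := by
    rw [(hPr q).2, (hPr p).2]; exact hlt
  obtain ⟨P', Q', hP', hQ', hrP', hrQ', hprod, hprod1⟩ := moveR (hPr p).1 (hPr q).1 hrank
  set P'' := Function.update (Function.update P p P') q Q' with hP''
  have hPp : P'' p = P' := by
    rw [hP'', Function.update_of_ne hpq, Function.update_self]
  have hPq : P'' q = Q' := by rw [hP'', Function.update_self]
  refine ⟨P'', H, ?_, hH, hdet, ?_⟩
  · intro i
    by_cases hiq : i = q
    · subst hiq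
      refine ⟨hPq ▸ hQ', ?_⟩
      rw [hPq, Function.update_self]
      have := hrQ'
      rw [(hPr i).2] at this
      omega
    by_cases hip : i = p
    · subst hip
      refine ⟨hPp ▸ hP', ?_⟩
      rw [hPp, hrP', (hPr i).2, Function.update_of_ne hiq, Function.update_self]
    · have hPi : P'' i = P i := by
        rw [hP'', Function.update_of_ne hiq, Function.update_of_ne hip]
      refine ⟨hPi ▸ (hPr i).1, ?_⟩
      rw [hPi, Function.update_of_ne hiq, Function.update_of_ne hip]
      exact (hPr i).2
  · rw [hAeq]
    funext j
    rw [Aker_coeff, Aker_coeff]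
    congr 2
    apply prod_splice p q hq
    · intro a hap haq
      rw [hP'', Function.update_of_ne haq, Function.update_of_ne hap]
    · rw [hPp, hPq]
      exact (pair_poly (P p) (P q) P' Q' hprod hprod1).symm


lemma sum_split {m : ℕ} (h : Fin m → ℕ) (p q : Fin m) (hpq : p ≠ q) :
    ∑ x, h x = h p + h q + ∑ x ∈ (Finset.univ.erase p).erase q, h x := by
  rw [← Finset.add_sum_erase _ h (Finset.mem_univ p)]
  rw [← Finset.add_sum_erase _ h (Finset.mem_erase.mpr ⟨Ne.symm hpq, Finset.mem_univ q⟩)]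
  ring

lemma sum_update2 {m : ℕ} (r : Fin m → ℕ) (p q : Fin m) (hpq : p ≠ q) (a b : ℕ) (g : ℕ → ℕ) :
    ∑ x, g (Function.update (Function.update r p a) q b x)
      = g a + g b + ∑ x ∈ (Finset.univ.erase p).erase q, g (r x) := by
  rw [sum_split (fun x => g (Function.update (Function.update r p a) q b x)) p q hpq]
  congr 1
  · congr 1
    · rw [Function.update_of_ne hpq, Function.update_self]
    · rw [Function.update_self]
  · apply Finset.sum_congr rfl
    intro x hx
    rw [Finset.mem_erase] at hx
    obtain ⟨hxq, hx'⟩ := hx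
    rw [Finset.mem_erase] at hx'
    rw [Function.update_of_ne hxq, Function.update_of_ne hx'.1]

lemma sock_step_s6 (n K : ℕ) (r : Fin (K-1) → ℕ) (hr : ∀ x, r x ≤ n) (p q : Fin (K-1))
    (hq : (q:ℕ) = (p:ℕ)+1) (hne : r p ≠ r q) :
    ∃ r'' : Fin (K-1) → ℕ,
      (∀ x, r'' x ≤ n) ∧ (∑ x, r'' x = ∑ x, r x) ∧ SOCK n K r ⊆ SOCK n K r'' ∧
      (∀ x, x ≠ p → x ≠ q → r'' x = r x) ∧
      ((r q < r p ∧ r'' p = r p - 1 ∧ r'' q = r q + 1 ∧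
          ∑ x, (r'' x)^2 + 2 * r p = ∑ x, (r x)^2 + 2 * r q + 2)
        ∨ (r p < r q ∧ r'' p = r p + 1 ∧ r'' q = r q - 1 ∧
          ∑ x, (r'' x)^2 + 2 * r q = ∑ x, (r x)^2 + 2 * r p + 2)) := by
  have hpq : p ≠ q := fun h => by rw [h] at hq; omega
  rcases Nat.lt_or_ge (r q) (r p) with hlt | hge
  · refine ⟨Function.update (Function.update r p (r p - 1)) q (r q + 1), ?_, ?_, ?_, ?_, ?_⟩
    · intro x
      by_cases hxq : x = q
      · subst hxq; rw [Function.update_self]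
        have := hr p; have := hr x; omega
      by_cases hxp : x = p
      · subst hxp; rw [Function.update_of_ne hxq, Function.update_self]
        have := hr x; omega
      · rw [Function.update_of_ne hxq, Function.update_of_ne hxp]; exact hr x
    · calc ∑ x, Function.update (Function.update r p (r p - 1)) q (r q + 1) x
          = (r p - 1) + (r q + 1) + ∑ x ∈ (Finset.univ.erase p).erase q, r x :=
            sum_update2 r p q hpq _ _ (fun t => t)
        _ = ∑ x, r x := by rw [sum_split r p q hpq]; omega
    · exact sock_moveL n K r p q hq hlt
    · intro x hxp hxq
      rw [Function.update_of_ne hxq, Function.update_of_ne hxp]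
    · left
      refine ⟨hlt, ?_, ?_, ?_⟩
      · rw [Function.update_of_ne hpq, Function.update_self]
      · rw [Function.update_self]
      · rw [sum_update2 r p q hpq _ _ (fun t => t^2), sum_split (fun x => (r x)^2) p q hpq]
        obtain ⟨c, hc⟩ : ∃ c, r p = r q + 1 + c := ⟨r p - r q - 1, by omega⟩
        rw [hc]
        have h1 : r q + 1 + c - 1 = r q + c := by omega
        rw [h1]
        ring
  · have hlt : r p < r q := by omega
    refine ⟨Function.update (Function.update r p (r p + 1)) q (r q - 1), ?_, ?_, ?_, ?_, ?_⟩
    · intro x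
      by_cases hxq : x = q
      · subst hxq; rw [Function.update_self]
        have := hr x; omega
      by_cases hxp : x = p
      · subst hxp; rw [Function.update_of_ne hxq, Function.update_self]
        have := hr q; have := hr x; omega
      · rw [Function.update_of_ne hxq, Function.update_of_ne hxp]; exact hr x
    · calc ∑ x, Function.update (Function.update r p (r p + 1)) q (r q - 1) x
          = (r p + 1) + (r q - 1) + ∑ x ∈ (Finset.univ.erase p).erase q, r x :=
            sum_update2 r p q hpq _ _ (fun t => t)
        _ = ∑ x, r x := by rw [sum_split r p q hpq]; omega
    · exact sock_moveR n K r p q hq hlt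
    · intro x hxp hxq
      rw [Function.update_of_ne hxq, Function.update_of_ne hxp]
    · right
      refine ⟨hlt, ?_, ?_, ?_⟩
      · rw [Function.update_of_ne hpq, Function.update_self]
      · rw [Function.update_self]
      · rw [sum_update2 r p q hpq _ _ (fun t => t^2), sum_split (fun x => (r x)^2) p q hpq]
        obtain ⟨c, hc⟩ : ∃ c, r q = r p + 1 + c := ⟨r q - r p - 1, by omega⟩
        rw [hc]
        have h1 : r p + 1 + c - 1 = r p + c := by omega
        rw [h1]
        ring


lemma sock_main (n K : ℕ) : ∀ d : ℕ, ∀ r : Fin (K-1) → ℕ, (∀ p, r p ≤ n) →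
    ∀ i j : Fin (K-1), r j + 2 ≤ r i → ((i:ℕ) + d = (j:ℕ) ∨ (j:ℕ) + d = (i:ℕ)) →
    ∃ r' : Fin (K-1) → ℕ, (∀ p, r' p ≤ n) ∧ (∑ p, r' p = ∑ p, r p) ∧
      SOCK n K r ⊆ SOCK n K r' ∧ ∑ p, (r' p)^2 < ∑ p, (r p)^2 := by
  intro d
  induction d using Nat.strong_induction_on with
  | _ d IH =>
  intro r hr i j hrij hd
  have hij : (i:ℕ) ≠ (j:ℕ) := by
    intro h
    have : i = j := Fin.ext h
    subst this; omega
  have hdpos : 1 ≤ d := by omega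
  rcases Nat.lt_or_ge d 2 with hd1 | hd2
  · -- d = 1 : adjacent
    have hd1' : d = 1 := by omega
    subst hd1'
    rcases hd with hA | hB
    · -- i + 1 = j, so p = i, q = j, r p > r q + 1
      obtain ⟨r'', hb, hsum, hsub, _, hcase⟩ :=
        sock_step_s6 n K r hr i j (by omega) (by omega)
      rcases hcase with ⟨_, _, _, hsq⟩ | ⟨hlt, _, _, _⟩
      · exact ⟨r'', hb, hsum, hsub, by omega⟩
      · omega
    · -- j + 1 = i, so p = j, q = i
      obtain ⟨r'', hb, hsum, hsub, _, hcase⟩ :=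
        sock_step_s6 n K r hr j i (by omega) (by omega)
      rcases hcase with ⟨hlt, _, _, _⟩ | ⟨_, _, _, hsq⟩
      · omega
      · exact ⟨r'', hb, hsum, hsub, by omega⟩
  · rcases hd with hA | hB
    · -- i to the left of j
      have hkval : (j:ℕ) - 1 < K - 1 := by have := j.isLt; omega
      set k : Fin (K-1) := ⟨(j:ℕ) - 1, hkval⟩ with hkdef
      have hkv : (k:ℕ) = (j:ℕ) - 1 := rfl
      by_cases hik : r k + 2 ≤ r i
      · exact IH (d-1) (by omega) r hr i k hik (Or.inl (by omega))
      · by_cases hkj : r j + 2 ≤ r k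
        · exact IH 1 (by omega) r hr k j hkj (Or.inl (by omega))
        · have hk1 : r k = r j + 1 := by omega
          obtain ⟨r'', hb, hsum, hsub, hoff, hcase⟩ :=
            sock_step_s6 n K r hr k j (by omega) (by omega)
          rcases hcase with ⟨_, hp, hq', hsq⟩ | ⟨hlt, _, _, _⟩
          · have hik' : i ≠ k := by
              intro h; rw [h] at hik; omega
            have hij' : i ≠ j := fun h => by rw [h] at hij; omega
            have hri : r'' i = r i := hoff i hik' hij'
            have hrk : r'' k = r j := by omega
            obtain ⟨r', hb', hsum', hsub', hsq'⟩ :=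
              IH (d-1) (by omega) r'' hb i k (by omega) (Or.inl (by omega))
            refine ⟨r', hb', by omega, hsub.trans hsub', by omega⟩
          · omega
    · -- j to the left of i
      have hkval : (j:ℕ) + 1 < K - 1 := by have := i.isLt; omega
      set k : Fin (K-1) := ⟨(j:ℕ) + 1, hkval⟩ with hkdef
      have hkv : (k:ℕ) = (j:ℕ) + 1 := rfl
      by_cases hik : r k + 2 ≤ r i
      · exact IH (d-1) (by omega) r hr i k hik (Or.inr (by omega))
      · by_cases hkj : r j + 2 ≤ r k
        · exact IH 1 (by omega) r hr k j hkj (Or.inr (by omega))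
        · have hk1 : r k = r j + 1 := by omega
          obtain ⟨r'', hb, hsum, hsub, hoff, hcase⟩ :=
            sock_step_s6 n K r hr j k (by omega) (by omega)
          rcases hcase with ⟨hlt, _, _, _⟩ | ⟨_, hp, hq', hsq⟩
          · omega
          · have hik' : i ≠ k := by
              intro h; rw [h] at hik; omega
            have hij' : i ≠ j := fun h => by rw [h] at hij; omega
            have hri : r'' i = r i := hoff i hij' hik'
            have hrk : r'' k = r j := by omega
            obtain ⟨r', hb', hsum', hsub', hsq'⟩ :=
              IH (d-1) (by omega) r'' hb i k (by omega) (Or.inr (by omega))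
            refine ⟨r', hb', by omega, hsub.trans hsub', by omega⟩


end Aux

theorem stmt6 (n K : ℕ) (hn : 1 ≤ n) (hK : 2 ≤ K)
    (r : Fin (K-1) → ℕ) (hr : ∀ i, r i ≤ n)
    (i j : Fin (K-1)) (hij : 2 ≤ |(r i : ℤ) - (r j : ℤ)|) :
    ∃ r' : Fin (K-1) → ℕ, (∀ p, r' p ≤ n) ∧ (∑ p, r' p = ∑ p, r p) ∧
      SOCK n K r ⊆ SOCK n K r' ∧ ∑ p, (r' p) ^ 2 < ∑ p, (r p) ^ 2 := by

  rcases le_abs.mp hij with h | h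
  · exact sock_main n K ((i:ℕ) - (j:ℕ) + ((j:ℕ) - (i:ℕ))) r hr i j (by omega) (by omega)
  · exact sock_main n K ((i:ℕ) - (j:ℕ) + ((j:ℕ) - (i:ℕ))) r hr j i (by omega) (by omega)
end

section
/- Let 1 ≤ i ≤ K−2, let P_1,…,P_{K−1} and P'_1,…,P'_{K−1} be symmetric projectors with P'_p = P_p for every p ∉ {i, i+1}, and let H, H' be special orthogonal matrices (HᵀH = I, det H = 1). Then 𝒜(P_1,…,P_{K−1},H) = 𝒜(P'_1,…,P'_{K−1},H') if and only if P_i + P_{i+1} = P'_i + P'_{i+1}, P_i·P_{i+1} = P'_i·P'_{i+1}, and H = H'. -/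
open Matrix

namespace Stmt9Aux

open Polynomial

variable {R : Type*} [Ring R] {ι : Type*}

lemma Cc_mul_Xpow (a b : R) (w : ℕ) :
    C a * (X ^ w * C b) = X ^ w * C (a * b) := by
  rw [← mul_assoc, ← X_pow_mul, mul_assoc, ← C_mul]

lemma Qmul (A B A' B' : R) :
    (C A + X * C B) * (C A' + X * C B') =
      C (A * A') + X * C (A * B' + B * A') + X ^ 2 * C (B * B') := by
  have h1 : C A * (X * C B') = X * C (A * B') := by
    simpa [pow_one] using Cc_mul_Xpow A B' 1
  have h2 : X * C B * C A' = X * C (B * A') := by rw [mul_assoc, ← C_mul]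
  have h3 : X * C B * (X * C B') = X ^ 2 * C (B * B') := by
    rw [mul_assoc, (by simpa [pow_one] using Cc_mul_Xpow B B' 1 : C B * (X * C B') = X * C (B * B')),
      ← mul_assoc, ← sq]
  rw [add_mul, mul_add, mul_add, ← C_mul, h1, h2, h3, _root_.map_add, mul_add]
  ring_nf
  abel

lemma one_sub_mul_one_sub (A B : R) : (1 - A) * (1 - B) = 1 - (A + B) + A * B := by
  noncomm_ring

lemma mixed_eq (A B : R) : A * (1 - B) + (1 - A) * B = (A + B) - A * B - A * B := by
  noncomm_ring

lemma QQt (P : R) (hP : P * P = P) :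
    (C P + X * C (1 - P)) * (C (1 - P) + X * C P) = X := by
  have h1 : P * (1 - P) = 0 := by rw [mul_sub, mul_one, hP, sub_self]
  have h2 : (1 - P) * P = 0 := by rw [sub_mul, one_mul, hP, sub_self]
  have h3 : P * P + (1 - P) * (1 - P) = 1 := by
    rw [one_sub_mul_one_sub, hP]; abel
  rw [Qmul, h1, h2, _root_.map_zero, mul_zero, zero_add, h3, _root_.map_one, mul_one, add_zero]

lemma QtQ (P : R) (hP : P * P = P) :
    (C (1 - P) + X * C P) * (C P + X * C (1 - P)) = X := by
  have h1 : P * (1 - P) = 0 := by rw [mul_sub, mul_one, hP, sub_self]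
  have h2 : (1 - P) * P = 0 := by rw [sub_mul, one_mul, hP, sub_self]
  have h3 : (1 - P) * (1 - P) + P * P = 1 := by
    rw [one_sub_mul_one_sub, hP]; abel
  rw [Qmul, h2, h1, _root_.map_zero, mul_zero, zero_add, h3, _root_.map_one, mul_one, add_zero]

lemma Xpow_cancel {p q : Polynomial R} (k : ℕ) (h : X ^ k * p = X ^ k * q) : p = q := by
  ext d
  have := congrArg (fun r => Polynomial.coeff r (d + k)) h
  simpa [Polynomial.coeff_X_pow_mul] using this

lemma expand' : ∀ (m : ℕ) (g : Fin m → Bool → R),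
    ((List.finRange m).map (fun p => g p false + g p true)).prod
      = ∑ δ : Fin m → Bool, ((List.finRange m).map (fun p => g p (δ p))).prod := by
  intro m
  induction m with
  | zero => intro g; simp
  | succ m ih =>
    intro g
    conv_lhs => rw [List.finRange_succ, List.map_cons, List.prod_cons, List.map_map]
    simp only [Function.comp_def]
    rw [ih (fun p b => g p.succ b)]
    rw [← Fintype.sum_equiv (Fin.consEquiv (fun _ => Bool))
      (fun bd : Bool × (Fin m → Bool) =>
        ((List.finRange (m+1)).map
          (fun p => g p ((Fin.consEquiv (fun _ => Bool)) bd p))).prod)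
      (fun δ => ((List.finRange (m+1)).map (fun p => g p (δ p))).prod)
      (fun bd => rfl)]
    rw [Fintype.sum_prod_type, Fintype.sum_bool, add_mul, Finset.mul_sum, Finset.mul_sum,
      ← Finset.sum_add_distrib, ← Finset.sum_add_distrib]
    apply Finset.sum_congr rfl
    intro δ _
    have hl : ∀ (b : Bool),
        ((List.finRange (m+1)).map
          (fun p => g p ((Fin.consEquiv (fun _ => Bool)) (b, δ) p))).prod
        = g 0 b * ((List.finRange m).map (fun p => g p.succ (δ p))).prod := by
      intro b
      conv_lhs => rw [List.finRange_succ, List.map_cons, List.prod_cons, List.map_map]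
      simp [Fin.consEquiv, Function.comp_def, Fin.cons_succ, Fin.cons_zero]
    rw [hl true, hl false]
    abel

lemma extractX (l : List ι) (w : ι → ℕ) (c : ι → R) :
    (l.map (fun p => X ^ (w p) * C (c p))).prod
      = X ^ ((l.map w).sum) * C ((l.map c).prod) := by
  induction l with
  | nil => simp
  | cons p t ih =>
    rw [List.map_cons, List.prod_cons, ih, List.map_cons, List.map_cons, List.prod_cons,
      List.sum_cons, mul_assoc, Cc_mul_Xpow, ← mul_assoc, ← pow_add]

lemma revQt_mul (l : List ι) (Q Qt : ι → Polynomial R) (h : ∀ p ∈ l, Qt p * Q p = X) :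
    ((l.map Qt).reverse).prod * (l.map Q).prod = X ^ l.length := by
  induction l with
  | nil => simp
  | cons p t ih =>
    simp only [List.map_cons, List.reverse_cons, List.prod_append, List.prod_cons,
      List.prod_nil, mul_one, List.length_cons]
    rw [mul_assoc, ← mul_assoc (Qt p), h p (List.mem_cons_self (a := p) (l := t)), X_mul, ← mul_assoc,
      ih (fun q hq => h q (List.mem_cons_of_mem p hq)), ← pow_succ]

lemma mul_revQt (l : List ι) (Q Qt : ι → Polynomial R) (h : ∀ p ∈ l, Q p * Qt p = X) :
    (l.map Q).prod * ((l.map Qt).reverse).prod = X ^ l.length := by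
  induction l with
  | nil => simp
  | cons p t ih =>
    simp only [List.map_cons, List.reverse_cons, List.prod_append, List.prod_cons,
      List.prod_nil, mul_one, List.length_cons]
    rw [mul_assoc (Q p), ← mul_assoc ((List.map Q t).prod),
      ih (fun q hq => h q (List.mem_cons_of_mem p hq)), X_pow_mul, ← mul_assoc,
      h p (List.mem_cons_self (a := p) (l := t)), ← pow_succ']

lemma split {S : Type*} [Monoid S] (m a : ℕ) (h : a + 1 < m) (f : Fin m → S) :
    ((List.finRange m).map f).prod =
      ((((List.finRange m).take a).map f).prod) *
      (f ⟨a, by omega⟩ * (f ⟨a + 1, h⟩ *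
        ((((List.finRange m).drop (a + 2)).map f).prod))) := by
  conv_lhs => rw [← List.take_append_drop a (List.finRange m)]
  rw [List.drop_eq_getElem_cons (by simp; omega),
    List.drop_eq_getElem_cons (l := List.finRange m) (i := a + 1) (by simp; omega)]
  simp only [List.getElem_finRange, List.map_append, List.map_cons, List.prod_append,
    List.prod_cons]
  norm_num [mul_assoc, Fin.cast_mk]

lemma mem_take {m a : ℕ} {x : Fin m} (hx : x ∈ (List.finRange m).take a) : (x : ℕ) < a := by
  rw [List.mem_iff_getElem] at hx
  obtain ⟨k, hk, hkx⟩ := hx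
  have hk' : k < a := by
    have := hk
    simp [List.length_take] at this
    omega
  rw [List.getElem_take] at hkx
  subst hkx
  simpa [List.getElem_finRange]

lemma mem_drop {m a : ℕ} {x : Fin m} (hx : x ∈ (List.finRange m).drop a) : a ≤ (x : ℕ) := by
  rw [List.mem_iff_getElem] at hx
  obtain ⟨k, hk, hkx⟩ := hx
  rw [List.getElem_drop] at hkx
  subst hkx
  simp [List.getElem_finRange]

lemma wt_le (m : ℕ) (δ : Fin m → Bool) : (∑ i, if δ i then 1 else 0) ≤ m := by
  calc (∑ i, if δ i then 1 else 0) ≤ ∑ _i : Fin m, 1 :=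
        Finset.sum_le_sum (fun i _ => by split <;> omega)
    _ = m := by simp

lemma fiber {R : Type*} [AddCommMonoid R] (K m : ℕ) (hmK : m < K)
    (f : (Fin m → Bool) → R) :
    ∑ j : Fin K, ∑ δ ∈ Finset.univ.filter
        (fun δ : Fin m → Bool => (∑ i, if δ i then 1 else 0) = (j : ℕ)), f δ
      = ∑ δ : Fin m → Bool, f δ := by
  rw [← Finset.sum_fiberwise_of_maps_to
    (g := fun δ : Fin m → Bool =>
      (⟨∑ i, if δ i then 1 else 0, lt_of_le_of_lt (wt_le m δ) hmK⟩ : Fin K))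
    (fun δ _ => Finset.mem_univ _) f]
  refine Finset.sum_congr rfl (fun j _ => ?_)
  refine Finset.sum_congr (Finset.filter_congr (fun δ _ => ?_)) (fun _ _ => rfl)
  simp [Fin.ext_iff]

lemma rep (n K : ℕ) (hK : 3 ≤ K) (P : Fin (K-1) → Matrix (Fin n) (Fin n) ℝ)
    (H : Matrix (Fin n) (Fin n) ℝ) :
    C H * ((List.finRange (K-1)).map (fun p => C (P p) + X * C (1 - P p))).prod
      = ∑ j : Fin K, X ^ (j : ℕ) * C (Aker n K P H j) := by
  have hmK : K - 1 < K := by omega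
  have h1 : ((List.finRange (K-1)).map (fun p => C (P p) + X * C (1 - P p))).prod
      = ∑ δ : Fin (K-1) → Bool,
          X ^ (∑ i, if δ i then 1 else 0) *
            C (((List.finRange (K-1)).map
              (fun p => if δ p then 1 - P p else P p)).prod) := by
    have e := expand' (K-1) (fun p b => if b then X * C (1 - P p) else C (P p))
    rw [show (fun p : Fin (K-1) => C (P p) + X * C (1 - P p)) = (fun p : Fin (K-1) =>
      (if (false = true) then X * C (1 - P p) else C (P p)) +
      (if (true = true) then X * C (1 - P p) else C (P p))) from by funext p; simp, e]
    refine Finset.sum_congr rfl (fun δ _ => ?_)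
    have e2 := extractX (List.finRange (K-1)) (fun p => if δ p then 1 else 0)
      (fun p => if δ p then 1 - P p else P p)
    have e3 : (List.map (fun p => X ^ (if δ p then 1 else 0) *
        C (if δ p then 1 - P p else P p)) (List.finRange (K-1)))
        = (List.map (fun p => if δ p then X * C (1 - P p) else C (P p))
            (List.finRange (K-1))) := by
      refine List.map_congr_left (fun p _ => ?_)
      by_cases hb : δ p <;> simp [hb]
    rw [e3] at e2
    rw [e2, ← Fin.sum_univ_def]
  rw [h1, Finset.mul_sum]
  rw [Finset.sum_congr rfl (fun δ _ => Cc_mul_Xpow H _ _)]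
  rw [← fiber K (K-1) hmK
    (fun δ => X ^ (∑ i, if δ i then 1 else 0) *
      C (H * ((List.finRange (K-1)).map (fun p => if δ p then 1 - P p else P p)).prod))]
  refine Finset.sum_congr rfl (fun j _ => ?_)
  rw [Aker]
  rw [_root_.map_sum, Finset.mul_sum]
  refine Finset.sum_congr rfl (fun δ hδ => ?_)
  rw [(Finset.mem_filter.mp hδ).2]

lemma coeff_rep {R : Type*} [Ring R] (K : ℕ) (A : Fin K → R) (j : Fin K) :
    (∑ j' : Fin K, X ^ (j' : ℕ) * C (A j')).coeff (j : ℕ) = A j := by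
  rw [Polynomial.finset_sum_coeff]
  have h : ∀ j' : Fin K, (X ^ (j' : ℕ) * C (A j')).coeff (j : ℕ)
      = if j' = j then A j' else 0 := by
    intro j'
    rw [X_pow_mul, C_mul_X_pow_eq_monomial, Polynomial.coeff_monomial]
    simp [Fin.ext_iff]
  rw [Finset.sum_congr rfl (fun j' _ => h j'), Finset.sum_ite_eq' Finset.univ j A]
  simp

lemma sumAker (n K : ℕ) (hK : 3 ≤ K) (P : Fin (K-1) → Matrix (Fin n) (Fin n) ℝ)
    (H : Matrix (Fin n) (Fin n) ℝ) : ∑ j : Fin K, Aker n K P H j = H := by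
  simp only [Aker]
  rw [fiber K (K-1) (by omega)
    (fun δ => H * ((List.finRange (K-1)).map
      (fun i => if δ i then (1 : Matrix (Fin n) (Fin n) ℝ) - P i else P i)).prod),
    ← Finset.mul_sum]
  have e := expand' (K-1) (fun p b => if b then (1 : Matrix (Fin n) (Fin n) ℝ) - P p else P p)
  rw [← e]
  have h2 : (List.map (fun p : Fin (K-1) =>
      (if (false = true) then (1 : Matrix (Fin n) (Fin n) ℝ) - P p else P p) +
      (if (true = true) then (1 : Matrix (Fin n) (Fin n) ℝ) - P p else P p))
        (List.finRange (K-1)))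
      = List.map (fun _ => (1 : Matrix (Fin n) (Fin n) ℝ)) (List.finRange (K-1)) := by
    refine List.map_congr_left (fun p _ => ?_)
    simp
  rw [h2]
  simp

lemma coeffs012 {R : Type*} [Ring R] {c0 c1 c2 d0 d1 d2 : R}
    (h : C c0 + X * C c1 + X ^ 2 * C c2 = C d0 + X * C d1 + X ^ 2 * C d2) :
    c0 = d0 ∧ c1 = d1 ∧ c2 = d2 := by
  have h' : C c0 + (monomial 1) c1 + (monomial 2) c2
      = C d0 + (monomial 1) d1 + (monomial 2) d2 := by
    simpa [X_mul, Polynomial.C_mul_X_eq_monomial, X_pow_mul, C_mul_X_pow_eq_monomial] using h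
  refine ⟨?_, ?_, ?_⟩
  · have := congrArg (fun q : Polynomial R => q.coeff 0) h'
    simpa [Polynomial.coeff_monomial, Polynomial.coeff_C] using this
  · have := congrArg (fun q : Polynomial R => q.coeff 1) h'
    simpa [Polynomial.coeff_monomial, Polynomial.coeff_C] using this
  · have := congrArg (fun q : Polynomial R => q.coeff 2) h'
    simpa [Polynomial.coeff_monomial, Polynomial.coeff_C] using this

end Stmt9Aux

open Polynomial Stmt9Aux in
theorem stmt9 (n K : ℕ) (hn : 1 ≤ n) (hK : 3 ≤ K)
    (i : Fin (K-1)) (hi : (i : ℕ) + 1 < K - 1)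
    (P P' : Fin (K-1) → Matrix (Fin n) (Fin n) ℝ)
    (hP : ∀ p, IsSymProj n (P p)) (hP' : ∀ p, IsSymProj n (P' p))
    (hPeq : ∀ p, p ≠ i → p ≠ (⟨(i : ℕ) + 1, hi⟩ : Fin (K-1)) → P' p = P p)
    (H H' : Matrix (Fin n) (Fin n) ℝ)
    (hH : Hᵀ * H = 1) (hHdet : H.det = 1)
    (hH' : H'ᵀ * H' = 1) (hH'det : H'.det = 1) :
    Aker n K P H = Aker n K P' H' ↔
      (P i + P ⟨(i : ℕ) + 1, hi⟩ = P' i + P' ⟨(i : ℕ) + 1, hi⟩ ∧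
       P i * P ⟨(i : ℕ) + 1, hi⟩ = P' i * P' ⟨(i : ℕ) + 1, hi⟩ ∧ H = H') := by
  classical
  set i1 : Fin (K-1) := (⟨(i : ℕ) + 1, hi⟩ : Fin (K-1)) with hi1
  have hrep := rep n K hK P H
  have hrep' := rep n K hK P' H'
  have hsplitP := split (K-1) (i : ℕ) hi (fun p => C (P p) + X * C (1 - P p))
  have hsplitP' := split (K-1) (i : ℕ) hi (fun p => C (P' p) + X * C (1 - P' p))
  have hA' : ((((List.finRange (K-1)).take (i : ℕ)).map
        (fun p => C (P' p) + X * C (1 - P' p))).prod)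
      = ((((List.finRange (K-1)).take (i : ℕ)).map
        (fun p => C (P p) + X * C (1 - P p))).prod) := by
    congr 1
    refine List.map_congr_left (fun x hx => ?_)
    have hlt := mem_take hx
    have hx1 : x ≠ i := fun e => by simp [e] at hlt
    have hx2 : x ≠ i1 := fun e => by
      have : (x : ℕ) = (i : ℕ) + 1 := by rw [e]
      omega
    rw [hPeq x hx1 hx2]
  have hB' : ((((List.finRange (K-1)).drop ((i : ℕ) + 2)).map
        (fun p => C (P' p) + X * C (1 - P' p))).prod)
      = ((((List.finRange (K-1)).drop ((i : ℕ) + 2)).map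
        (fun p => C (P p) + X * C (1 - P p))).prod) := by
    congr 1
    refine List.map_congr_left (fun x hx => ?_)
    have hge := mem_drop hx
    have hx1 : x ≠ i := fun e => by
      have : (x : ℕ) = (i : ℕ) := by rw [e]
      omega
    have hx2 : x ≠ i1 := fun e => by
      have : (x : ℕ) = (i : ℕ) + 1 := by rw [e]
      omega
    rw [hPeq x hx1 hx2]
  constructor
  · intro h
    have hH2 : H = H' := by
      rw [← sumAker n K hK P H, ← sumAker n K hK P' H', h]
    have hFeq : C H * ((List.finRange (K-1)).map
          (fun p => C (P p) + X * C (1 - P p))).prod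
        = C H * ((List.finRange (K-1)).map
          (fun p => C (P' p) + X * C (1 - P' p))).prod := by
      rw [hrep, h, ← hrep', ← hH2]
    have hprod : ((List.finRange (K-1)).map (fun p => C (P p) + X * C (1 - P p))).prod
        = ((List.finRange (K-1)).map (fun p => C (P' p) + X * C (1 - P' p))).prod := by
      calc ((List.finRange (K-1)).map (fun p => C (P p) + X * C (1 - P p))).prod
          = C (Hᵀ * H) * ((List.finRange (K-1)).map
              (fun p => C (P p) + X * C (1 - P p))).prod := by rw [hH, _root_.map_one, one_mul]
        _ = C Hᵀ * (C H * ((List.finRange (K-1)).map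
              (fun p => C (P p) + X * C (1 - P p))).prod) := by rw [_root_.map_mul, mul_assoc]
        _ = C Hᵀ * (C H * ((List.finRange (K-1)).map
              (fun p => C (P' p) + X * C (1 - P' p))).prod) := by rw [hFeq]
        _ = C (Hᵀ * H) * ((List.finRange (K-1)).map
              (fun p => C (P' p) + X * C (1 - P' p))).prod := by rw [_root_.map_mul, mul_assoc]
        _ = ((List.finRange (K-1)).map (fun p => C (P' p) + X * C (1 - P' p))).prod := by
              rw [hH, _root_.map_one, one_mul]
    rw [hsplitP, hsplitP', hA', hB'] at hprod
    simp only [Fin.eta] at hprod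
    rw [← hi1] at hprod
    -- cancel the left common factor
    have hTA := revQt_mul ((List.finRange (K-1)).take (i : ℕ))
      (fun p => C (P p) + X * C (1 - P p)) (fun p => C (1 - P p) + X * C (P p))
      (fun p _ => QtQ (P p) (hP p).1)
    have step1 : (C (P i) + X * C (1 - P i)) * ((C (P i1) + X * C (1 - P i1)) *
          ((((List.finRange (K-1)).drop ((i : ℕ) + 2)).map
            (fun p => C (P p) + X * C (1 - P p))).prod))
        = (C (P' i) + X * C (1 - P' i)) * ((C (P' i1) + X * C (1 - P' i1)) *
          ((((List.finRange (K-1)).drop ((i : ℕ) + 2)).map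
            (fun p => C (P p) + X * C (1 - P p))).prod)) := by
      apply Xpow_cancel (((List.finRange (K-1)).take (i : ℕ)).length)
      rw [← hTA, mul_assoc, mul_assoc, hprod]
    -- cancel the right common factor
    have hTB := mul_revQt ((List.finRange (K-1)).drop ((i : ℕ) + 2))
      (fun p => C (P p) + X * C (1 - P p)) (fun p => C (1 - P p) + X * C (P p))
      (fun p _ => QQt (P p) (hP p).1)
    have step2 : (C (P i) + X * C (1 - P i)) * (C (P i1) + X * C (1 - P i1))
        = (C (P' i) + X * C (1 - P' i)) * (C (P' i1) + X * C (1 - P' i1)) := by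
      apply Xpow_cancel (((List.finRange (K-1)).drop ((i : ℕ) + 2)).length)
      calc X ^ (((List.finRange (K-1)).drop ((i : ℕ) + 2)).length) *
            ((C (P i) + X * C (1 - P i)) * (C (P i1) + X * C (1 - P i1)))
          = ((C (P i) + X * C (1 - P i)) * (C (P i1) + X * C (1 - P i1))) *
            X ^ (((List.finRange (K-1)).drop ((i : ℕ) + 2)).length) := X_pow_mul
        _ = ((C (P i) + X * C (1 - P i)) * (C (P i1) + X * C (1 - P i1))) *
            ((((List.finRange (K-1)).drop ((i : ℕ) + 2)).map
              (fun p => C (P p) + X * C (1 - P p))).prod *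
             ((((List.finRange (K-1)).drop ((i : ℕ) + 2)).map
              (fun p => C (1 - P p) + X * C (P p))).reverse).prod) := by rw [hTB]
        _ = ((C (P' i) + X * C (1 - P' i)) * ((C (P' i1) + X * C (1 - P' i1)) *
              ((((List.finRange (K-1)).drop ((i : ℕ) + 2)).map
                (fun p => C (P p) + X * C (1 - P p))).prod))) *
             ((((List.finRange (K-1)).drop ((i : ℕ) + 2)).map
              (fun p => C (1 - P p) + X * C (P p))).reverse).prod := by
            rw [← step1]; simp only [mul_assoc]
        _ = ((C (P' i) + X * C (1 - P' i)) * (C (P' i1) + X * C (1 - P' i1))) *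
            ((((List.finRange (K-1)).drop ((i : ℕ) + 2)).map
              (fun p => C (P p) + X * C (1 - P p))).prod *
             ((((List.finRange (K-1)).drop ((i : ℕ) + 2)).map
              (fun p => C (1 - P p) + X * C (P p))).reverse).prod) := by
            simp only [mul_assoc]
        _ = ((C (P' i) + X * C (1 - P' i)) * (C (P' i1) + X * C (1 - P' i1))) *
            X ^ (((List.finRange (K-1)).drop ((i : ℕ) + 2)).length) := by rw [hTB]
        _ = X ^ (((List.finRange (K-1)).drop ((i : ℕ) + 2)).length) *
            ((C (P' i) + X * C (1 - P' i)) * (C (P' i1) + X * C (1 - P' i1))) :=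
            X_pow_mul.symm
    rw [Qmul, Qmul] at step2
    obtain ⟨e0, e1, e2⟩ := coeffs012 step2
    refine ⟨?_, e0, hH2⟩
    rw [one_sub_mul_one_sub, one_sub_mul_one_sub, e0] at e2
    have h3 : (1 : Matrix (Fin n) (Fin n) ℝ) - (P i + P i1) = 1 - (P' i + P' i1) :=
      add_right_cancel e2
    exact sub_right_inj.mp h3
  · rintro ⟨hS, hM, hHeq⟩
    have hQQ : (C (P i) + X * C (1 - P i)) * (C (P i1) + X * C (1 - P i1))
        = (C (P' i) + X * C (1 - P' i)) * (C (P' i1) + X * C (1 - P' i1)) := by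
      have e1 : P i * (1 - P i1) + (1 - P i) * P i1
          = P' i * (1 - P' i1) + (1 - P' i) * P' i1 := by
        rw [mixed_eq, mixed_eq, hS, hM]
      have e2 : (1 - P i) * (1 - P i1) = (1 - P' i) * (1 - P' i1) := by
        rw [one_sub_mul_one_sub, one_sub_mul_one_sub, hS, hM]
      rw [Qmul, Qmul, hM, e1, e2]
    have hprod : ((List.finRange (K-1)).map (fun p => C (P p) + X * C (1 - P p))).prod
        = ((List.finRange (K-1)).map (fun p => C (P' p) + X * C (1 - P' p))).prod := by
      rw [hsplitP, hsplitP', hA', hB']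
      simp only [Fin.eta]
      rw [← hi1]
      congr 1
      rw [← mul_assoc, ← mul_assoc, hQQ]
    funext j
    calc Aker n K P H j
        = (∑ j' : Fin K, X ^ (j' : ℕ) * C (Aker n K P H j')).coeff (j : ℕ) :=
          (coeff_rep K (Aker n K P H) j).symm
      _ = (C H * ((List.finRange (K-1)).map
            (fun p => C (P p) + X * C (1 - P p))).prod).coeff (j : ℕ) := by rw [hrep]
      _ = (C H' * ((List.finRange (K-1)).map
            (fun p => C (P' p) + X * C (1 - P' p))).prod).coeff (j : ℕ) := by
          rw [hHeq, hprod]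
      _ = (∑ j' : Fin K, X ^ (j' : ℕ) * C (Aker n K P' H' j')).coeff (j : ℕ) := by rw [hrep']
      _ = Aker n K P' H' j := coeff_rep K (Aker n K P' H') j
end

section
/- Let P_1, …, P_{K−1} be symmetric projectors, H an n×n real matrix, and let (A_0,…,A_{K−1}) = 𝒜(P_1,…,P_{K−1},H). Define, for 0 ≤ k ≤ K−1, B_k = Σ over δ' ∈ {0,1}^{K−1} with δ'_1+⋯+δ'_{K−1} = k of H·∏_{i=1}^{K−1}((1−δ'_i)P_i + δ'_i·I), the product taken in increasing order of i. Then for every 0 ≤ j ≤ K−1, A_j = Σ_{k=0}^{j} (−1)^{j−k} · binom((K−1)−k, j−k) · B_k, where binom denotes the binomial coefficient. -/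
open Matrix

namespace Stmt11Aux

/-- count of `true`s -/
def cnt {m : ℕ} (δ : Fin m → Bool) : ℕ := ∑ i, if δ i then 1 else 0

lemma cnt_cons {m : ℕ} (b : Bool) (ε : Fin m → Bool) :
    cnt (Fin.cons b ε) = (if b then 1 else 0) + cnt ε := by
  unfold cnt
  rw [Fin.sum_univ_succ]
  simp

lemma cnt_tail {m : ℕ} (δ : Fin (m+1) → Bool) :
    cnt δ = (if δ 0 then 1 else 0) + cnt (fun i => δ i.succ) := by
  exact Fin.sum_univ_succ _

lemma cnt_le {m : ℕ} {ε δ : Fin m → Bool} (h : ∀ i, ε i = true → δ i = true) :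
    cnt ε ≤ cnt δ := by
  unfold cnt
  apply Finset.sum_le_sum
  intro i _
  cases hε : ε i
  · simp
  · simp [h i hε]

lemma cnt_eq_card {m : ℕ} (δ : Fin m → Bool) :
    cnt δ = (Finset.univ.filter (fun i => δ i = true)).card := by
  rw [Finset.card_filter]
  rfl

lemma cnt_le_m {m : ℕ} (δ : Fin m → Bool) : cnt δ ≤ m := by
  calc cnt δ ≤ ∑ _i : Fin m, 1 := Finset.sum_le_sum (by intro i _; split <;> simp)
  _ = m := by simp

/-- The consing equivalence. -/
def consEquiv (m : ℕ) : Bool × (Fin m → Bool) ≃ (Fin (m+1) → Bool) where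
  toFun p := Fin.cons p.1 p.2
  invFun δ := (δ 0, fun i => δ i.succ)
  left_inv p := by
    ext i
    · simp
    · simp
  right_inv δ := Fin.cons_self_tail δ

lemma sum_split {m : ℕ} {A : Type*} [AddCommMonoid A] (f : (Fin (m+1) → Bool) → A) :
    ∑ δ : Fin (m+1) → Bool, f δ = ∑ b : Bool, ∑ ε : Fin m → Bool, f (Fin.cons b ε) := by
  rw [← Equiv.sum_comp (consEquiv m) f, Fintype.sum_prod_type]
  rfl

/-- counting lemma -/
lemma count_card {m : ℕ} (ε : Fin m → Bool) (j : ℕ) :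
    (Finset.univ.filter (fun δ : Fin m → Bool =>
        cnt δ = j ∧ ∀ i, ε i = true → δ i = true)).card
      = if cnt ε ≤ j then (m - cnt ε).choose (j - cnt ε) else 0 := by
  by_cases hkj : cnt ε ≤ j
  · rw [if_pos hkj]
    set E : Finset (Fin m) := Finset.univ.filter (fun i => ε i = true) with hE
    have hEcard : E.card = cnt ε := (cnt_eq_card ε).symm
    have hcompl : Eᶜ.card = m - cnt ε := by
      rw [Finset.card_compl, hEcard]
      simp
    rw [← hcompl, ← Finset.card_powersetCard (j - cnt ε) Eᶜ]
    apply Finset.card_bij'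
      (i := fun δ _ => Finset.univ.filter (fun x => δ x = true ∧ ε x = false))
      (j := fun t _ => fun x => ε x || decide (x ∈ t))
    · intro δ hδ
      simp only [Finset.mem_filter, Finset.mem_univ, true_and] at hδ
      obtain ⟨hδj, hle⟩ := hδ
      rw [Finset.mem_powersetCard]
      constructor
      · intro x hx
        simp only [Finset.mem_filter, Finset.mem_univ, true_and] at hx
        simp [hE, Finset.mem_compl, hx.2]
      · have hsub : E ⊆ Finset.univ.filter (fun x => δ x = true) := by
          intro x hx
          simp only [hE, Finset.mem_filter, Finset.mem_univ, true_and] at hx ⊢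
          exact hle x hx
        have : Finset.univ.filter (fun x => δ x = true ∧ ε x = false)
            = (Finset.univ.filter (fun x => δ x = true)) \ E := by
          ext x
          simp [hE, Bool.not_eq_true]
        rw [this, Finset.card_sdiff_of_subset hsub, hEcard, ← cnt_eq_card, hδj]
    · intro t ht
      rw [Finset.mem_powersetCard] at ht
      obtain ⟨hsub, hcard⟩ := ht
      simp only [Finset.mem_filter, Finset.mem_univ, true_and]
      constructor
      · have hdisj : Disjoint E t := by
          rw [Finset.disjoint_right]
          intro x hx
          have := hsub hx
          simp [Finset.mem_compl] at this
          exact this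
        have : cnt (fun x => ε x || decide (x ∈ t)) = (E ∪ t).card := by
          rw [cnt_eq_card]
          congr 1
          ext x
          simp [hE, Finset.mem_union]
        rw [this, Finset.card_union_of_disjoint hdisj, hEcard, hcard]
        omega
      · intro i hi
        simp [hi]
    · intro δ hδ
      simp only [Finset.mem_filter, Finset.mem_univ, true_and] at hδ
      obtain ⟨_, hle⟩ := hδ
      funext x
      by_cases hε : ε x = true
      · simp [hε, hle x hε]
      · simp only [Bool.not_eq_true] at hε
        cases hδx : δ x <;> simp [hε, hδx]
    · intro t ht
      rw [Finset.mem_powersetCard] at ht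
      obtain ⟨hsub, _⟩ := ht
      ext x
      simp only [Finset.mem_filter, Finset.mem_univ, true_and, Bool.or_eq_true,
        decide_eq_true_eq]
      constructor
      · rintro ⟨h1 | h1, h2⟩
        · rw [h2] at h1; exact absurd h1 (by simp)
        · exact h1
      · intro hx
        have := hsub hx
        simp [hE, Finset.mem_compl, Bool.not_eq_true] at this
        exact ⟨Or.inr hx, this⟩
  · rw [if_neg hkj]
    rw [Finset.card_eq_zero, Finset.eq_empty_iff_forall_notMem]
    intro δ hδ
    simp only [Finset.mem_filter, Finset.mem_univ, true_and] at hδ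
    exact hkj (hδ.1 ▸ cnt_le hδ.2)

variable {n : ℕ}

/-- Expansion lemma. -/
lemma expand : ∀ (m : ℕ) (P : Fin m → Matrix (Fin n) (Fin n) ℝ) (δ : Fin m → Bool),
    ((List.finRange m).map
        (fun i => if δ i then (1 : Matrix (Fin n) (Fin n) ℝ) - P i else P i)).prod
    = ∑ ε : Fin m → Bool,
        if ∀ i, ε i = true → δ i = true then
          ((-1 : ℝ) ^ (cnt δ - cnt ε)) •
            ((List.finRange m).map
              (fun i => if ε i then (1 : Matrix (Fin n) (Fin n) ℝ) else P i)).prod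
        else 0
  | 0, P, δ => by
    have huniv : (Finset.univ : Finset (Fin 0 → Bool)) = {fun i => i.elim0} := by
      ext ε
      simp only [Finset.mem_univ, Finset.mem_singleton, true_iff]
      funext i
      exact i.elim0
    rw [huniv, Finset.sum_singleton, if_pos (fun i => i.elim0)]
    simp [List.finRange_zero, cnt]
  | m+1, P, δ => by
    have hprod : ∀ (f : Fin (m+1) → Matrix (Fin n) (Fin n) ℝ),
        ((List.finRange (m+1)).map f).prod
          = f 0 * ((List.finRange m).map (fun i => f i.succ)).prod := by
      intro f
      rw [List.finRange_succ, List.map_cons, List.prod_cons, List.map_map]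
      rfl
    have hIH := expand m (fun i => P i.succ) (fun i => δ i.succ)
    rw [hprod, sum_split]
    simp only [hprod, Fin.cons_zero, Fin.cons_succ, cnt_cons, Fin.forall_fin_succ]
    rw [Fintype.sum_bool, cnt_tail δ]
    by_cases h0 : δ 0 = true
    · simp only [h0, if_true, eq_self_iff_true, true_implies, true_and, one_mul,
        Nat.add_sub_add_left, Bool.false_eq_true, false_implies, ite_false, zero_add]
      rw [hIH, sub_mul, one_mul, sub_eq_add_neg]
      congr 1
      rw [Finset.mul_sum, ← Finset.sum_neg_distrib]
      apply Finset.sum_congr rfl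
      intro ε _
      by_cases hc : ∀ i, ε i = true → δ i.succ = true
      · rw [if_pos hc, if_pos hc]
        have hle : cnt ε ≤ cnt (fun i => δ i.succ) := cnt_le hc
        have he : 1 + cnt (fun i => δ i.succ) - cnt ε
            = (cnt (fun i => δ i.succ) - cnt ε) + 1 := by omega
        rw [he, pow_succ, mul_neg_one, neg_smul, mul_smul_comm]
      · rw [if_neg hc, if_neg hc, mul_zero, neg_zero]
    · simp only [h0, if_false, Bool.false_eq_true, true_implies, false_implies,
        false_and, true_and, if_true, zero_add, Finset.sum_const_zero]
      rw [hIH, Finset.mul_sum]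
      apply Finset.sum_congr rfl
      intro ε _
      by_cases hc : ∀ i, ε i = true → δ i.succ = true
      · rw [if_pos hc, if_pos hc, mul_smul_comm]
      · rw [if_neg hc, if_neg hc, mul_zero]

end Stmt11Aux

theorem stmt11 (n K : ℕ) (hn : 1 ≤ n) (hK : 2 ≤ K)
    (P : Fin (K-1) → Matrix (Fin n) (Fin n) ℝ) (hP : ∀ i, IsSymProj n (P i))
    (H : Matrix (Fin n) (Fin n) ℝ)
    (B : ℕ → Matrix (Fin n) (Fin n) ℝ)
    (hB : ∀ k, B k = ∑ δ ∈ Finset.univ.filter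
        (fun δ : Fin (K-1) → Bool => (∑ i, (if δ i then 1 else 0)) = k),
      H * ((List.finRange (K-1)).map
        (fun i => if δ i then (1 : Matrix (Fin n) (Fin n) ℝ) else P i)).prod) :
    ∀ j : Fin K, Aker n K P H j =
      ∑ k ∈ Finset.range ((j : ℕ) + 1),
        ((-1 : ℝ) ^ ((j : ℕ) - k) * (Nat.choose ((K-1) - k) ((j : ℕ) - k))) • B k := by
  intro j
  have hjm : (j : ℕ) ≤ K - 1 := by have := j.isLt; omega
  have hAker : Aker n K P H j = ∑ δ ∈ Finset.univ.filter
      (fun δ : Fin (K-1) → Bool => Stmt11Aux.cnt δ = (j : ℕ)),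
    H * ((List.finRange (K-1)).map
      (fun i => if δ i then (1 : Matrix (Fin n) (Fin n) ℝ) - P i else P i)).prod := rfl
  rw [hAker]
  calc
    (∑ δ ∈ Finset.univ.filter
        (fun δ : Fin (K-1) → Bool => Stmt11Aux.cnt δ = (j : ℕ)),
      H * ((List.finRange (K-1)).map
        (fun i => if δ i then (1 : Matrix (Fin n) (Fin n) ℝ) - P i else P i)).prod)
      = ∑ δ ∈ Finset.univ.filter
            (fun δ : Fin (K-1) → Bool => Stmt11Aux.cnt δ = (j : ℕ)),
          ∑ ε : Fin (K-1) → Bool,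
            if ∀ i, ε i = true → δ i = true then
              ((-1 : ℝ) ^ (Stmt11Aux.cnt δ - Stmt11Aux.cnt ε)) •
                (H * ((List.finRange (K-1)).map
                  (fun i => if ε i then (1 : Matrix (Fin n) (Fin n) ℝ) else P i)).prod)
            else 0 := by
        apply Finset.sum_congr rfl
        intro δ _
        rw [Stmt11Aux.expand, Finset.mul_sum]
        apply Finset.sum_congr rfl
        intro ε _
        split_ifs with h
        · rw [mul_smul_comm]
        · rw [mul_zero]
    _ = ∑ ε : Fin (K-1) → Bool,
          ∑ δ ∈ Finset.univ.filter
            (fun δ : Fin (K-1) → Bool => Stmt11Aux.cnt δ = (j : ℕ)),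
            if ∀ i, ε i = true → δ i = true then
              ((-1 : ℝ) ^ ((j : ℕ) - Stmt11Aux.cnt ε)) •
                (H * ((List.finRange (K-1)).map
                  (fun i => if ε i then (1 : Matrix (Fin n) (Fin n) ℝ) else P i)).prod)
            else 0 := by
        rw [Finset.sum_comm]
        apply Finset.sum_congr rfl
        intro ε _
        apply Finset.sum_congr rfl
        intro δ hδ
        rw [Finset.mem_filter] at hδ
        rw [hδ.2]
    _ = ∑ ε : Fin (K-1) → Bool,
          (if Stmt11Aux.cnt ε ≤ (j : ℕ) then
              ((K-1) - Stmt11Aux.cnt ε).choose ((j : ℕ) - Stmt11Aux.cnt ε) else 0) •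
            (((-1 : ℝ) ^ ((j : ℕ) - Stmt11Aux.cnt ε)) •
              (H * ((List.finRange (K-1)).map
                (fun i => if ε i then (1 : Matrix (Fin n) (Fin n) ℝ) else P i)).prod)) := by
        apply Finset.sum_congr rfl
        intro ε _
        rw [← Finset.sum_filter, Finset.filter_filter, Finset.sum_const,
          Stmt11Aux.count_card]
    _ = ∑ k ∈ Finset.range ((K-1) + 1),
          ∑ ε ∈ Finset.univ.filter (fun ε : Fin (K-1) → Bool => Stmt11Aux.cnt ε = k),
          (if Stmt11Aux.cnt ε ≤ (j : ℕ) then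
              ((K-1) - Stmt11Aux.cnt ε).choose ((j : ℕ) - Stmt11Aux.cnt ε) else 0) •
            (((-1 : ℝ) ^ ((j : ℕ) - Stmt11Aux.cnt ε)) •
              (H * ((List.finRange (K-1)).map
                (fun i => if ε i then (1 : Matrix (Fin n) (Fin n) ℝ) else P i)).prod)) := by
        rw [Finset.sum_fiberwise_of_maps_to
          (fun δ _ => Finset.mem_range.mpr (Nat.lt_succ_of_le (Stmt11Aux.cnt_le_m δ)))]
    _ = ∑ k ∈ Finset.range ((j : ℕ) + 1),
          ∑ ε ∈ Finset.univ.filter (fun ε : Fin (K-1) → Bool => Stmt11Aux.cnt ε = k),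
          (if Stmt11Aux.cnt ε ≤ (j : ℕ) then
              ((K-1) - Stmt11Aux.cnt ε).choose ((j : ℕ) - Stmt11Aux.cnt ε) else 0) •
            (((-1 : ℝ) ^ ((j : ℕ) - Stmt11Aux.cnt ε)) •
              (H * ((List.finRange (K-1)).map
                (fun i => if ε i then (1 : Matrix (Fin n) (Fin n) ℝ) else P i)).prod)) := by
        symm
        apply Finset.sum_subset (Finset.range_subset_range.mpr (by omega))
        intro k hk hnk
        rw [Finset.mem_range] at hk hnk
        apply Finset.sum_eq_zero
        intro ε hε
        rw [Finset.mem_filter] at hε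
        rw [if_neg (by omega), zero_smul]
    _ = ∑ k ∈ Finset.range ((j : ℕ) + 1),
          ((-1 : ℝ) ^ ((j : ℕ) - k) * (Nat.choose ((K-1) - k) ((j : ℕ) - k))) • B k := by
        apply Finset.sum_congr rfl
        intro k hk
        rw [Finset.mem_range] at hk
        rw [hB k, Finset.smul_sum]
        apply Finset.sum_congr rfl
        intro ε hε
        rw [Finset.mem_filter] at hε
        have hck : Stmt11Aux.cnt ε = k := hε.2
        rw [hck, if_pos (by omega), ← Nat.cast_smul_eq_nsmul ℝ, smul_smul, mul_comm]
end
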